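/- arXiv:2504.00479 — 5 statements merged into one kernel-verified Lean document; each statement's English description precedes it below -/
import Mathlib

section
/- Fix ε ∈ (0, 1/8) and σ ≥ 1/2 + ε. Assume: (i) a₀ = 1/(2π²) and a₁, …, a₄ are real numbers with ∫₀^T |ζ(1/2 + it)|⁴ dt = T·Σ_{s=0}^{4} a_s (ln T)^{4−s} + O(T^{7/8+ε}) as T → ∞; (ii) g : ℝ → ℝ satisfies g(T) > T for all large T, the integrals ∫_T^{g(T)} |ζ(1/2 + it)|² dt and ∫_T^{g(T)} |ζ(σ + it)|² dt are positive for all large T, and (∫_T^{g(T)} |ζ(1/2 + it)|² dt)/(∫_T^{g(T)} |ζ(σ + it)|² dt) = (1/ζ(2σ))·ln T + O(1) as T → ∞. Put c₀ = 1 and c_s = 2π²·ζ(2σ)^{−s}·a_s for s = 1, 2, 3, 4. Then, as T → ∞, (∫_T^{g(T)} |ζ(σ + it)|² dt)⁴ · (∫₀^T |ζ(1/2 + it)|⁴ dt) · (Σ_{s=0}^{4} c_s · (∫_T^{g(T)} |ζ(1/2 + it)|² dt)^{4−s} · (∫_T^{g(T)} |ζ(σ + it)|² dt)^s)^{−1}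 = (ζ(2σ)⁴/(2π²))·T·(1 + O(1/ln T)). -/
open Filter Real Complex Asymptotics

private lemma pow_sub_pow_abs_le' (x y M : ℝ) (hx : |x| ≤ M) (hy : |y| ≤ M) :
    ∀ k : ℕ, |x ^ k - y ^ k| ≤ k * M ^ (k - 1) * |x - y| := by
  intro k
  induction k with
  | zero => simp
  | succ n ih =>
    have hM : 0 ≤ M := le_trans (abs_nonneg x) hx
    rcases Nat.eq_zero_or_pos n with hn | hn
    · subst hn; simp
    · have key : x ^ (n+1) - y ^ (n+1) = x ^ n * (x - y) + y * (x ^ n - y ^ n) := by ring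
      have hMM : M * M ^ (n - 1) = M ^ n := by
        rw [← pow_succ']
        congr 1
        omega
      calc |x ^ (n+1) - y ^ (n+1)|
          ≤ |x ^ n * (x - y)| + |y * (x ^ n - y ^ n)| := by rw [key]; exact abs_add_le _ _
        _ = |x| ^ n * |x - y| + |y| * |x ^ n - y ^ n| := by
            rw [abs_mul, abs_mul, _root_.abs_pow]
        _ ≤ M ^ n * |x - y| + M * (n * M ^ (n - 1) * |x - y|) := by
            gcongr
        _ = M ^ n * |x - y| + n * (M * M ^ (n - 1)) * |x - y| := by ring
        _ = (n+1 : ℕ) * M ^ ((n+1) - 1) * |x - y| := by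
            rw [hMM]
            push_cast
            ring

set_option maxHeartbeats 1000000 in
/-- Lemma 2 of the paper: the composed expression of
zeta-integrals equals `(ζ(2σ)⁴/(2π²))·T·(1 + O(1/ln T))`. -/
theorem composed_expression_asymptotics
    (ε σ : ℝ) (hε : 0 < ε) (hε' : ε < 1 / 8) (hσ : 1 / 2 + ε ≤ σ)
    (a : ℕ → ℝ) (ha0 : a 0 = 1 / (2 * Real.pi ^ 2))
    (F I₂ Iσ : ℝ → ℝ) (g : ℝ → ℝ)
    (hF : ∀ T : ℝ, F T = ∫ t in (0:ℝ)..T,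
      ‖riemannZeta (1 / 2 + t * Complex.I)‖ ^ 4)
    (hI₂ : ∀ T : ℝ, I₂ T = ∫ t in T..(g T),
      ‖riemannZeta (1 / 2 + t * Complex.I)‖ ^ 2)
    (hIσ : ∀ T : ℝ, Iσ T = ∫ t in T..(g T),
      ‖riemannZeta (σ + t * Complex.I)‖ ^ 2)
    (hIngham : (fun T : ℝ => F T -
        T * ∑ s ∈ Finset.range 5, a s * Real.log T ^ (4 - s))
      =O[atTop] fun T : ℝ => T ^ ((7:ℝ) / 8 + ε))
    (hg : ∀ᶠ T : ℝ in atTop, T < g T)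
    (hI₂pos : ∀ᶠ T : ℝ in atTop, 0 < I₂ T)
    (hIσpos : ∀ᶠ T : ℝ in atTop, 0 < Iσ T)
    (hquot : (fun T : ℝ =>
        I₂ T / Iσ T - Real.log T / (riemannZeta (2 * σ)).re)
      =O[atTop] fun _ : ℝ => (1:ℝ))
    (c : ℕ → ℝ) (hc0 : c 0 = 1)
    (hc : ∀ s : ℕ, 1 ≤ s → s ≤ 4 →
      c s = 2 * Real.pi ^ 2 * ((riemannZeta (2 * σ)).re) ^ (-(s:ℤ)) * a s) :
    ∃ D : ℝ → ℝ,
      (D =O[atTop] fun T : ℝ => 1 / Real.log T) ∧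
      ∀ᶠ T : ℝ in atTop,
        Iσ T ^ 4 * F T *
            (∑ s ∈ Finset.range 5, c s * I₂ T ^ (4 - s) * Iσ T ^ s)⁻¹ =
          ((riemannZeta (2 * σ)).re ^ 4 / (2 * Real.pi ^ 2)) * T * (1 + D T) := by
  have hπ : 0 < Real.pi := Real.pi_pos
  have h2σ : (1:ℝ) < 2 * σ := by linarith
  set z : ℝ := (riemannZeta (2 * σ)).re with hzdef
  -- positivity of z
  have hz_pos : 0 < z := by
    have hre : (1:ℝ) < (2 * (σ:ℂ)).re := by simpa using h2σ
    have hz : riemannZeta (2 * (σ:ℂ)) = ∑' n : ℕ, 1 / (n : ℂ) ^ (2 * (σ:ℂ)) :=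
      zeta_eq_tsum_one_div_nat_cpow hre
    have hsc : Summable (fun n : ℕ => 1 / (n : ℂ) ^ (2 * (σ:ℂ))) :=
      Complex.summable_one_div_nat_cpow.mpr hre
    have hterm : ∀ n : ℕ, (1 / (n : ℂ) ^ (2 * (σ:ℂ))).re = 1 / (n : ℝ) ^ (2 * σ) := by
      intro n
      have : ((n : ℂ) ^ (2 * (σ:ℂ))) = (((n:ℝ) ^ (2*σ) : ℝ) : ℂ) := by
        rw [Complex.ofReal_cpow (Nat.cast_nonneg n)]
        push_cast
        ring_nf
      rw [this, ← Complex.ofReal_one, ← Complex.ofReal_div, Complex.ofReal_re]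
    have hzre : z = ∑' n : ℕ, 1 / (n : ℝ) ^ (2 * σ) := by
      rw [hzdef, hz, Complex.re_tsum hsc]
      exact tsum_congr hterm
    have hsr : Summable (fun n : ℕ => 1 / (n : ℝ) ^ (2 * σ)) :=
      Real.summable_one_div_nat_rpow.mpr h2σ
    rw [hzre]
    refine Summable.tsum_pos hsr (fun n => by positivity) 1 ?_
    norm_num
  have hz_ne : z ≠ 0 := ne_of_gt hz_pos
  clear_value z
  have hcs : ∀ s : ℕ, 1 ≤ s → s ≤ 4 → c s = 2 * Real.pi ^ 2 * (z ^ s)⁻¹ * a s := by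
    intro s h1 h4
    rw [hc s h1 h4, zpow_neg, zpow_natCast]
  set C : ℝ := z ^ 4 / (2 * Real.pi ^ 2) with hCdef
  have hCpos : 0 < C := by positivity
  set D : ℝ → ℝ := fun T => Iσ T ^ 4 * F T *
      (∑ s ∈ Finset.range 5, c s * I₂ T ^ (4 - s) * Iσ T ^ s)⁻¹ / (C * T) - 1 with hDdef
  clear_value C D
  refine ⟨D, ?_, ?_⟩
  swap
  · -- the eventual equality
    filter_upwards [eventually_gt_atTop 0] with T hT
    have hCT : C * T ≠ 0 := by positivity
    have h1D : 1 + D T = Iσ T ^ 4 * F T *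
        (∑ s ∈ Finset.range 5, c s * I₂ T ^ (4 - s) * Iσ T ^ s)⁻¹ / (C * T) := by
      simp [hDdef]
    rw [h1D, mul_comm (C * T), div_mul_cancel₀ _ hCT]
  · -- the big-O estimate
    obtain ⟨Cr, hCrpos, hCrO⟩ := hquot.exists_pos
    rw [isBigOWith_iff] at hCrO
    obtain ⟨CF, hCFpos, hCFO⟩ := hIngham.exists_pos
    rw [isBigOWith_iff] at hCFO
    set A : ℝ := |a 1| + |a 2| + |a 3| + |a 4| with hAdef
    have hA0 : 0 ≤ A := by positivity
    set Cq : ℝ := 1 / z + Cr with hCqdef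
    have hCq0 : 0 < Cq := by positivity
    set C₁ : ℝ := (|c 0| + |c 1| + |c 2| + |c 3| + |c 4|) * (4 * Cr * Cq ^ 3) with hC₁def
    have hC₁0 : 0 ≤ C₁ := by positivity
    set K : ℝ := 8 * Real.pi ^ 2 * (CF + C * C₁) with hKdef
    have hK0 : 0 ≤ K := by positivity
    clear_value A Cq C₁ K
    rw [isBigO_iff]
    refine ⟨K, ?_⟩
    have hL : ∀ᶠ T : ℝ in atTop,
        max (max 1 z) (max (8 * Real.pi ^ 2 * A + 1) (4 * z ^ 4 * C₁)) ≤ Real.log T :=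
      Real.tendsto_log_atTop.eventually_ge_atTop _
    filter_upwards [hCrO, hCFO, hIσpos, hL, eventually_ge_atTop (1:ℝ)]
      with T hr hFb hIσp hLb hT1
    have hT0 : (0:ℝ) < T := by linarith
    clear hF hI₂ hIσ hg hI₂pos hIσpos hIngham hquot hL hCrO hCFO
    -- log bounds
    set l : ℝ := Real.log T with hldef
    have hl1 : 1 ≤ l := le_trans (le_max_left _ _) (le_trans (le_max_left _ _) hLb)
    have hlz : z ≤ l := le_trans (le_max_right _ _) (le_trans (le_max_left _ _) hLb)
    have hlA : 8 * Real.pi ^ 2 * A + 1 ≤ l :=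
      le_trans (le_max_left _ _) (le_trans (le_max_right _ _) hLb)
    have hlC1 : 4 * z ^ 4 * C₁ ≤ l :=
      le_trans (le_max_right _ _) (le_trans (le_max_right _ _) hLb)
    have hl0 : 0 < l := lt_of_lt_of_le one_pos hl1
    clear_value l
    -- quotient bound
    set q : ℝ := I₂ T / Iσ T with hqdef
    have hrb : |q - l / z| ≤ Cr := by
      rw [Real.norm_eq_abs, norm_one, mul_one] at hr
      exact hr
    clear_value q
    set M : ℝ := l / z + Cr with hMdef
    clear_value M
    have hlz1 : 1 ≤ l / z := (one_le_div hz_pos).2 hlz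
    have hM1 : 1 ≤ M := by rw [hMdef]; linarith
    have hqM : |q| ≤ M := by
      have hq : q = l / z + (q - l / z) := by ring
      rw [hq]
      calc |l / z + (q - l / z)| ≤ |l / z| + |q - l / z| := abs_add_le _ _
        _ ≤ l / z + Cr := by
            rw [_root_.abs_of_nonneg (by positivity : (0:ℝ) ≤ l / z)]
            linarith
        _ = M := hMdef.symm
    have hlzM : |l / z| ≤ M := by
      rw [_root_.abs_of_nonneg (by positivity : (0:ℝ) ≤ l / z), hMdef]
      linarith
    have hdiff : ∀ k : ℕ, k ≤ 4 → |q ^ k - (l / z) ^ k| ≤ 4 * Cr * Cq ^ 3 * l ^ 3 := by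
      intro k hk
      have h1 := pow_sub_pow_abs_le' q (l / z) M hqM hlzM k
      have hMk : M ^ (k - 1) ≤ M ^ 3 := pow_le_pow_right₀ hM1 (by omega)
      have hMl : M ≤ Cq * l := by
        rw [hMdef, hCqdef]
        have hCrl : Cr ≤ Cr * l := le_mul_of_one_le_right hCrpos.le hl1
        have hrr : (1 / z + Cr) * l = l / z + Cr * l := by ring
        rw [hrr]
        linarith
      have hM3 : M ^ 3 ≤ (Cq * l) ^ 3 := pow_le_pow_left₀ (by linarith) hMl 3
      calc |q ^ k - (l / z) ^ k| ≤ (k : ℝ) * M ^ (k - 1) * |q - l / z| := h1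
        _ ≤ 4 * M ^ 3 * Cr := by
            have hk4 : (k : ℝ) ≤ 4 := by exact_mod_cast hk
            have hMp : (0:ℝ) ≤ M ^ (k-1) := by positivity
            have s1 : (k : ℝ) * M ^ (k-1) ≤ 4 * M ^ 3 :=
              mul_le_mul hk4 hMk hMp (by norm_num)
            exact mul_le_mul s1 hrb (abs_nonneg _) (by positivity)
        _ ≤ 4 * (Cq * l) ^ 3 * Cr := by
            have h5 : 4 * M ^ 3 ≤ 4 * (Cq * l) ^ 3 := by linarith
            exact mul_le_mul_of_nonneg_right h5 hCrpos.le
        _ = 4 * Cr * Cq ^ 3 * l ^ 3 := by ring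
    -- expand the sums
    have hIσ_ne : Iσ T ≠ 0 := ne_of_gt hIσp
    have hI₂q : I₂ T = q * Iσ T := by rw [hqdef, div_mul_cancel₀ _ hIσ_ne]
    set SS : ℝ := c 4 + c 3 * q + c 2 * q ^ 2 + c 1 * q ^ 3 + c 0 * q ^ 4 with hSSdef
    clear_value SS
    have hexp : (∑ s ∈ Finset.range 5, c s * I₂ T ^ (4 - s) * Iσ T ^ s)
        = Iσ T ^ 4 * SS := by
      rw [hSSdef]
      simp only [Finset.sum_range_succ, Finset.sum_range_zero]
      norm_num
      rw [hI₂q]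
      ring
    have hPexp : (∑ s ∈ Finset.range 5, a s * l ^ (4 - s))
        = a 4 + a 3 * l + a 2 * l ^ 2 + a 1 * l ^ 3 + a 0 * l ^ 4 := by
      simp only [Finset.sum_range_succ, Finset.sum_range_zero]
      norm_num
      ring
    set PT : ℝ := a 4 + a 3 * l + a 2 * l ^ 2 + a 1 * l ^ 3 + a 0 * l ^ 4 with hPTdef
    clear_value PT
    -- Δ bound
    have hc1 := hcs 1 (by norm_num) (by norm_num)
    have hc2 := hcs 2 (by norm_num) (by norm_num)
    have hc3 := hcs 3 (by norm_num) (by norm_num)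
    have hc4 := hcs 4 (by norm_num) (by norm_num)
    have hΔeq : SS - 2 * Real.pi ^ 2 / z ^ 4 * PT =
        c 0 * (q ^ 4 - (l / z) ^ 4) + c 1 * (q ^ 3 - (l / z) ^ 3)
          + c 2 * (q ^ 2 - (l / z) ^ 2) + c 3 * (q - l / z) := by
      rw [hSSdef, hPTdef, hc0, hc1, hc2, hc3, hc4, ha0]
      field_simp
      ring
    have hΔb : |SS - 2 * Real.pi ^ 2 / z ^ 4 * PT| ≤ C₁ * l ^ 3 := by
      rw [hΔeq]
      have h4 := hdiff 4 (by norm_num)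
      have h3 := hdiff 3 (by norm_num)
      have h2 := hdiff 2 (by norm_num)
      have h1 := by simpa using hdiff 1 (by norm_num)
      set B : ℝ := 4 * Cr * Cq ^ 3 * l ^ 3 with hBdef
      have hB0 : 0 ≤ B := by rw [hBdef]; positivity
      clear_value B
      calc |c 0 * (q ^ 4 - (l / z) ^ 4) + c 1 * (q ^ 3 - (l / z) ^ 3)
            + c 2 * (q ^ 2 - (l / z) ^ 2) + c 3 * (q - l / z)|
          ≤ |c 0 * (q ^ 4 - (l / z) ^ 4) + c 1 * (q ^ 3 - (l / z) ^ 3)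
            + c 2 * (q ^ 2 - (l / z) ^ 2)| + |c 3 * (q - l / z)| := abs_add_le _ _
        _ ≤ |c 0 * (q ^ 4 - (l / z) ^ 4) + c 1 * (q ^ 3 - (l / z) ^ 3)|
            + |c 2 * (q ^ 2 - (l / z) ^ 2)| + |c 3 * (q - l / z)| := by
              have := abs_add_le (c 0 * (q ^ 4 - (l / z) ^ 4) + c 1 * (q ^ 3 - (l / z) ^ 3))
                (c 2 * (q ^ 2 - (l / z) ^ 2))
              linarith
        _ ≤ |c 0 * (q ^ 4 - (l / z) ^ 4)| + |c 1 * (q ^ 3 - (l / z) ^ 3)|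
            + |c 2 * (q ^ 2 - (l / z) ^ 2)| + |c 3 * (q - l / z)| := by
              have := abs_add_le (c 0 * (q ^ 4 - (l / z) ^ 4)) (c 1 * (q ^ 3 - (l / z) ^ 3))
              linarith
        _ ≤ |c 0| * B + |c 1| * B + |c 2| * B + |c 3| * B := by
              rw [abs_mul, abs_mul, abs_mul, abs_mul]
              exact add_le_add (add_le_add (add_le_add
                (mul_le_mul_of_nonneg_left h4 (abs_nonneg _))
                (mul_le_mul_of_nonneg_left h3 (abs_nonneg _)))
                (mul_le_mul_of_nonneg_left h2 (abs_nonneg _)))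
                (mul_le_mul_of_nonneg_left h1 (abs_nonneg _))
        _ = (|c 0| + |c 1| + |c 2| + |c 3|) * B := by ring
        _ ≤ (|c 0| + |c 1| + |c 2| + |c 3| + |c 4|) * B :=
              mul_le_mul_of_nonneg_right (by linarith [abs_nonneg (c 4)]) hB0
        _ = C₁ * l ^ 3 := by rw [hC₁def, hBdef]; ring
    -- P lower bound
    have hl2 : l ^ 2 ≤ l ^ 3 := pow_le_pow_right₀ hl1 (by norm_num)
    have hl3 : l ≤ l ^ 3 := by
      calc l = l ^ 1 := (pow_one l).symm
        _ ≤ l ^ 3 := pow_le_pow_right₀ hl1 (by norm_num)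
    have hl4 : 1 ≤ l ^ 3 := one_le_pow₀ hl1
    have hPlb : l ^ 4 / (4 * Real.pi ^ 2) ≤ PT := by
      rw [hPTdef, ha0]
      have e1 : -(|a 1| * l ^ 3) ≤ a 1 * l ^ 3 := by
        have h := mul_le_mul_of_nonneg_right (neg_abs_le (a 1)) (pow_nonneg hl0.le 3)
        linarith
      have e2 : -(|a 2| * l ^ 3) ≤ a 2 * l ^ 2 := by
        have f1 := mul_le_mul_of_nonpos_left hl2 (neg_nonpos.mpr (abs_nonneg (a 2)))
        have f2 := mul_le_mul_of_nonneg_right (neg_abs_le (a 2)) (sq_nonneg l)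
        linarith
      have e3 : -(|a 3| * l ^ 3) ≤ a 3 * l := by
        have f1 := mul_le_mul_of_nonpos_left hl3 (neg_nonpos.mpr (abs_nonneg (a 3)))
        have f2 := mul_le_mul_of_nonneg_right (neg_abs_le (a 3)) hl0.le
        linarith
      have e4 : -(|a 4| * l ^ 3) ≤ a 4 := by
        have f1 := mul_le_mul_of_nonpos_left hl4 (neg_nonpos.mpr (abs_nonneg (a 4)))
        have f2 := neg_abs_le (a 4)
        linarith
      have hla : 8 * Real.pi ^ 2 * A * l ^ 3 ≤ l * l ^ 3 :=
        mul_le_mul_of_nonneg_right (by linarith) (pow_nonneg hl0.le 3)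
      have hprod : 0 ≤ Real.pi ^ 2 * (A * l ^ 3) := by positivity
      have hAl' : A * l ^ 3 ≤ l ^ 4 / (4 * Real.pi ^ 2) := by
        rw [le_div_iff₀ (by positivity)]
        linarith
      have hid : 1 / (2 * Real.pi ^ 2) * l ^ 4 - l ^ 4 / (4 * Real.pi ^ 2)
          = l ^ 4 / (4 * Real.pi ^ 2) := by
        field_simp
        ring
      have hA_exp : A * l ^ 3 = |a 1| * l ^ 3 + |a 2| * l ^ 3 + |a 3| * l ^ 3
          + |a 4| * l ^ 3 := by
        rw [hAdef]; ring
      linarith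
    -- S lower bound
    have hSlb : l ^ 4 / (4 * z ^ 4) ≤ SS := by
      have hlo : -(C₁ * l ^ 3) ≤ SS - 2 * Real.pi ^ 2 / z ^ 4 * PT := neg_le_of_abs_le hΔb
      have h1 : 2 * Real.pi ^ 2 / z ^ 4 * (l ^ 4 / (4 * Real.pi ^ 2))
          ≤ 2 * Real.pi ^ 2 / z ^ 4 * PT :=
        mul_le_mul_of_nonneg_left hPlb (by positivity)
      have h2 : 2 * Real.pi ^ 2 / z ^ 4 * (l ^ 4 / (4 * Real.pi ^ 2)) = l ^ 4 / (2 * z ^ 4) := by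
        field_simp
        ring
      have h3 : C₁ * l ^ 3 ≤ l ^ 4 / (4 * z ^ 4) := by
        rw [le_div_iff₀ (by positivity)]
        have f := mul_le_mul_of_nonneg_right hlC1 (pow_nonneg hl0.le 3)
        linarith
      have h4 : l ^ 4 / (2 * z ^ 4) - l ^ 4 / (4 * z ^ 4) = l ^ 4 / (4 * z ^ 4) := by
        field_simp
        ring
      linarith [h1, h2, h3, h4, hlo]
    have hSpos : 0 < SS := lt_of_lt_of_le (by positivity) hSlb
    have hSS_ne : SS ≠ 0 := ne_of_gt hSpos
    -- F bound
    have hT78 : T ^ ((7:ℝ) / 8 + ε) ≤ T := by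
      have he : (7:ℝ) / 8 + ε = 1 + (ε - 1 / 8) := by ring
      rw [he, Real.rpow_add hT0, Real.rpow_one]
      have h2 : T ^ (ε - 1 / 8) ≤ 1 :=
        Real.rpow_le_one_of_one_le_of_nonpos hT1 (by linarith)
      calc T * T ^ (ε - 1 / 8) ≤ T * 1 := mul_le_mul_of_nonneg_left h2 hT0.le
        _ = T := mul_one T
    have hFb' : |F T - T * PT| ≤ CF * T := by
      rw [Real.norm_eq_abs, Real.norm_eq_abs, hPexp,
        _root_.abs_of_nonneg (Real.rpow_nonneg hT0.le _)] at hFb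
      calc |F T - T * PT| ≤ CF * T ^ ((7:ℝ)/8 + ε) := hFb
        _ ≤ CF * T := by gcongr
    -- numerator bound
    have hC1id : C * (2 * Real.pi ^ 2 / z ^ 4) = 1 := by
      rw [hCdef]; field_simp
    have hkey : F T - C * T * SS =
        (F T - T * PT) - C * T * (SS - 2 * Real.pi ^ 2 / z ^ 4 * PT) := by
      linear_combination (-(T * PT)) * hC1id
    have hnum : |F T - C * T * SS| ≤ CF * T + C * C₁ * T * l ^ 3 := by
      rw [hkey]
      calc |(F T - T * PT) - C * T * (SS - 2 * Real.pi ^ 2 / z ^ 4 * PT)|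
          ≤ |F T - T * PT| + |C * T * (SS - 2 * Real.pi ^ 2 / z ^ 4 * PT)| := abs_sub _ _
        _ ≤ CF * T + C * T * (C₁ * l ^ 3) := by
            rw [abs_mul, abs_mul, _root_.abs_of_pos hCpos, _root_.abs_of_pos hT0]
            gcongr
        _ = CF * T + C * C₁ * T * l ^ 3 := by ring
    -- D formula
    have hDeq : D T = (F T - C * T * SS) / (C * T * SS) := by
      simp only [hDdef]
      rw [hexp]
      field_simp
    -- final estimate
    rw [Real.norm_eq_abs, Real.norm_eq_abs, hDeq, abs_div,
      _root_.abs_of_pos (by positivity : (0:ℝ) < C * T * SS),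
      _root_.abs_of_pos (by positivity : (0:ℝ) < 1 / l), mul_one_div,
      div_le_div_iff₀ (by positivity) hl0]
    have hKC : K * C = 4 * z ^ 4 * (CF + C * C₁) := by
      rw [hKdef, hCdef]
      field_simp
      ring
    have hll4 : l ≤ l ^ 4 := by
      calc l = l ^ 1 := (pow_one l).symm
        _ ≤ l ^ 4 := pow_le_pow_right₀ hl1 (by norm_num)
    calc |F T - C * T * SS| * l ≤ (CF * T + C * C₁ * T * l ^ 3) * l :=
          mul_le_mul_of_nonneg_right hnum hl0.le
      _ ≤ (CF + C * C₁) * T * l ^ 4 := by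
          have h1 : CF * T * l ≤ CF * T * l ^ 4 := by
            have := mul_le_mul_of_nonneg_left hll4 (by positivity : (0:ℝ) ≤ CF * T)
            linarith
          linarith
      _ = K * (C * T * (l ^ 4 / (4 * z ^ 4))) := by
          rw [hKdef, hCdef]
          field_simp
          ring
      _ ≤ K * (C * T * SS) := by gcongr
end

section
/- Fix ε ∈ (0, 1/8) and σ ≥ 1/2 + ε. Assume: (i) a₀ = 1/(2π²) and a₁, …, a₄ are real numbers with ∫₀^T |ζ(1/2 + it)|⁴ dt = T·Σ_{s=0}^{4} a_s (ln T)^{4−s} + O(T^{7/8+ε}) as T → ∞; (ii) g : ℝ → ℝ satisfies g(T) > T for all large T, the integrals ∫_T^{g(T)} |ζ(1/2 + it)|² dt and ∫_T^{g(T)} |ζ(σ + it)|² dt are positive for all large T, and (∫_T^{g(T)} |ζ(1/2 + it)|² dt)/(∫_T^{g(T)} |ζ(σ + it)|² dt) = (1/ζ(2σ))·ln T + O(1) as T → ∞. Put c₀ = 1, c_s = 2π²·ζ(2σ)^{−s}·a_s for s = 1, 2, 3, 4, and for x > 0 and τ > 0 set u = u(τ, x) = (2π²/ζ(2σ)⁴)·x·τ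 and E(τ, x) = (∫_u^{g(u)} |ζ(σ + it)|² dt)⁴ · (∫₀^u |ζ(1/2 + it)|⁴ dt) · (Σ_{s=0}^{4} c_s · (∫_u^{g(u)} |ζ(1/2 + it)|² dt)^{4−s} · (∫_u^{g(u)} |ζ(σ + it)|² dt)^s)^{−1}. Then for every fixed x > 0, lim_{τ→∞} (1/τ)·E(τ, x) = x. -/
open Filter Real Complex Asymptotics

private lemma zeta_re_pos_aux {r : ℝ} (hr : 1 < r) : 0 < (riemannZeta r).re := by
  have hs : 1 < Complex.re (r : ℂ) := by simpa using hr
  have key : ∀ n : ℕ, (1 / ((n : ℂ) + 1) ^ (r : ℂ)) = ((1 / ((n : ℝ) + 1) ^ r : ℝ) : ℂ) := by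
    intro n
    rw [show ((n : ℂ) + 1) = ((((n : ℝ) + 1 : ℝ)) : ℂ) by push_cast; ring,
      ← Complex.ofReal_cpow (by positivity)]
    push_cast
    ring
  have hsumR : Summable (fun n : ℕ => 1 / ((n : ℝ) + 1) ^ r) := by
    have h1 : Summable (fun n : ℕ => 1 / (n : ℝ) ^ r) :=
      Real.summable_one_div_nat_rpow.mpr hr
    exact ((summable_nat_add_iff 1).mpr h1).congr fun n => by push_cast; ring_nf
  rw [zeta_eq_tsum_one_div_nat_add_one_cpow hs, tsum_congr key, ← Complex.ofReal_tsum,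
    Complex.ofReal_re]
  exact Summable.tsum_pos hsumR (fun n => by positivity) 0 (by positivity)

private lemma aux_q (q l z : ℝ) (hl : l ≠ 0) (hz : z ≠ 0) :
    (q - l / z) * l⁻¹ + 1 / z = q / l := by
  field_simp
  ring

private lemma aux_pow2 (l : ℝ) (hl : l ≠ 0) {s : ℕ} (hs : s ≤ 4) (as : ℝ) :
    as * l ^ (4 - s) / l ^ 4 = as * (l⁻¹) ^ s := by
  have h4 : l ^ (4 - s) * l ^ s = l ^ 4 := by rw [← pow_add]; congr 1; omega
  rw [← h4, inv_pow]
  field_simp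

private lemma aux_pow (q l : ℝ) (hl : l ≠ 0) {s : ℕ} (hs : s ≤ 4) (cs : ℝ) :
    cs * (q / l) ^ (4 - s) * l⁻¹ ^ s = cs * q ^ (4 - s) / l ^ 4 := by
  have h4 : l ^ (4 - s) * l ^ s = l ^ 4 := by rw [← pow_add]; congr 1; omega
  rw [div_pow, inv_pow, ← h4]
  field_simp

private lemma aux_pow3 (i2 iσ : ℝ) (hiσ : iσ ≠ 0) {s : ℕ} (hs : s ≤ 4) (cs : ℝ) :
    cs * i2 ^ (4 - s) * iσ ^ s = iσ ^ 4 * (cs * (i2 / iσ) ^ (4 - s)) := by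
  have h4 : iσ ^ (4 - s) * iσ ^ s = iσ ^ 4 := by rw [← pow_add]; congr 1; omega
  rw [div_pow, ← h4]
  field_simp

private lemma aux_final (f l uu t iσ S : ℝ) (hl : l ≠ 0) (hu : uu ≠ 0) (ht : t ≠ 0)
    (hiσ : iσ ≠ 0) :
    f / (uu * l ^ 4) * (S / l ^ 4)⁻¹ * (uu / t) = iσ ^ 4 * f * (iσ ^ 4 * S)⁻¹ / t := by
  rcases eq_or_ne S 0 with h | h
  · simp [h]
  · field_simp

/-- Theorem 1 of the paper: the new ζ-functional, a cross-breed
of the Ingham--Heath-Brown and Moser quotient formulas. -/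
theorem cross_breed_zeta_functional
    (ε σ : ℝ) (hε : 0 < ε) (hε' : ε < 1 / 8) (hσ : 1 / 2 + ε ≤ σ)
    (a : ℕ → ℝ) (ha0 : a 0 = 1 / (2 * Real.pi ^ 2))
    (F I₂ Iσ : ℝ → ℝ) (g : ℝ → ℝ)
    (hF : ∀ T : ℝ, F T = ∫ t in (0:ℝ)..T,
      ‖riemannZeta (1 / 2 + t * Complex.I)‖ ^ 4)
    (hI₂ : ∀ T : ℝ, I₂ T = ∫ t in T..(g T),
      ‖riemannZeta (1 / 2 + t * Complex.I)‖ ^ 2)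
    (hIσ : ∀ T : ℝ, Iσ T = ∫ t in T..(g T),
      ‖riemannZeta (σ + t * Complex.I)‖ ^ 2)
    (hIngham : (fun T : ℝ => F T -
        T * ∑ s ∈ Finset.range 5, a s * Real.log T ^ (4 - s))
      =O[atTop] fun T : ℝ => T ^ ((7:ℝ) / 8 + ε))
    (hg : ∀ᶠ T : ℝ in atTop, T < g T)
    (hI₂pos : ∀ᶠ T : ℝ in atTop, 0 < I₂ T)
    (hIσpos : ∀ᶠ T : ℝ in atTop, 0 < Iσ T)
    (hquot : (fun T : ℝ =>
        I₂ T / Iσ T - Real.log T / (riemannZeta (2 * σ)).re)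
      =O[atTop] fun _ : ℝ => (1:ℝ))
    (c : ℕ → ℝ) (hc0 : c 0 = 1)
    (hc : ∀ s : ℕ, 1 ≤ s → s ≤ 4 →
      c s = 2 * Real.pi ^ 2 * ((riemannZeta (2 * σ)).re) ^ (-(s:ℤ)) * a s)
    (u : ℝ → ℝ → ℝ)
    (hu : ∀ τ x : ℝ, u τ x =
      2 * Real.pi ^ 2 / (riemannZeta (2 * σ)).re ^ 4 * x * τ)
    (E : ℝ → ℝ → ℝ)
    (hE : ∀ τ x : ℝ, E τ x =
      Iσ (u τ x) ^ 4 * F (u τ x) *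
        (∑ s ∈ Finset.range 5,
          c s * I₂ (u τ x) ^ (4 - s) * Iσ (u τ x) ^ s)⁻¹) :
    ∀ x : ℝ, 0 < x →
      Tendsto (fun τ : ℝ => E τ x / τ) atTop (nhds x) := by
  intro x hx
  set Z : ℝ := (riemannZeta (2 * σ)).re with hZdef
  have hZ : 0 < Z := by
    have h := zeta_re_pos_aux (r := 2 * σ) (by linarith)
    rwa [show ((2 * σ : ℝ) : ℂ) = 2 * (σ : ℂ) by push_cast; ring] at h
  have hZne : Z ≠ 0 := ne_of_gt hZ
  have hπ : (0:ℝ) < Real.pi := Real.pi_pos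
  have hCx : (0:ℝ) < 2 * Real.pi ^ 2 / Z ^ 4 * x := by positivity
  -- u → ∞
  have huT : Tendsto (fun τ => u τ x) atTop atTop := by
    have : Tendsto (fun τ : ℝ => 2 * Real.pi ^ 2 / Z ^ 4 * x * τ) atTop atTop :=
      Tendsto.const_mul_atTop hCx tendsto_id
    exact this.congr fun τ => (hu τ x).symm
  have hLT : Tendsto (fun τ => Real.log (u τ x)) atTop atTop :=
    Real.tendsto_log_atTop.comp huT
  have hL0 : ∀ᶠ τ : ℝ in atTop, 0 < Real.log (u τ x) := hLT.eventually_gt_atTop 0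
  have hu1 : ∀ᶠ τ : ℝ in atTop, 1 < u τ x := huT.eventually_gt_atTop 1
  have hLinv : Tendsto (fun τ => (Real.log (u τ x))⁻¹) atTop (nhds 0) :=
    hLT.inv_tendsto_atTop
  -- Step 1 : Q / L → 1/Z
  have hQ : Tendsto (fun τ => I₂ (u τ x) / Iσ (u τ x) / Real.log (u τ x)) atTop
      (nhds (1 / Z)) := by
    have h1 : (fun τ => I₂ (u τ x) / Iσ (u τ x) - Real.log (u τ x) / Z) =O[atTop]
        (fun _ : ℝ => (1:ℝ)) := hquot.comp_tendsto huT
    have h2 := h1.mul (isBigO_refl (fun τ => (Real.log (u τ x))⁻¹) atTop)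
    have h3 : Tendsto (fun τ => (I₂ (u τ x) / Iσ (u τ x) - Real.log (u τ x) / Z) *
        (Real.log (u τ x))⁻¹) atTop (nhds 0) :=
      h2.trans_tendsto (by simpa using hLinv)
    have h4 := h3.add_const (1 / Z)
    rw [zero_add] at h4
    refine Tendsto.congr' ?_ h4
    filter_upwards [hL0] with τ hτ
    have hLne : Real.log (u τ x) ≠ 0 := ne_of_gt hτ
    exact aux_q _ _ _ hLne hZne
  -- Step 2 : F(u) / (u L⁴) → a 0
  have hFlim : Tendsto (fun τ => F (u τ x) / (u τ x * Real.log (u τ x) ^ 4)) atTop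
      (nhds (a 0)) := by
    have h1 : (fun τ => F (u τ x) -
        u τ x * ∑ s ∈ Finset.range 5, a s * Real.log (u τ x) ^ (4 - s)) =O[atTop]
        (fun τ => (u τ x) ^ ((7:ℝ) / 8 + ε)) := hIngham.comp_tendsto huT
    have h2 := h1.mul (isBigO_refl (fun τ => (u τ x * Real.log (u τ x) ^ 4)⁻¹) atTop)
    have h3 : Tendsto (fun τ => (u τ x) ^ ((7:ℝ) / 8 + ε) *
        (u τ x * Real.log (u τ x) ^ 4)⁻¹) atTop (nhds 0) := by
      have ha : Tendsto (fun τ => (u τ x) ^ (-(1 / 8 - ε))) atTop (nhds 0) :=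
        (tendsto_rpow_neg_atTop (by linarith)).comp huT
      have hb : Tendsto (fun τ => ((Real.log (u τ x))⁻¹) ^ 4) atTop (nhds 0) := by
        have := hLinv.pow 4
        simpa using this
      have hab := ha.mul hb
      rw [mul_zero] at hab
      refine Tendsto.congr' ?_ hab
      filter_upwards [hu1] with τ hτ
      have hu0 : (0:ℝ) < u τ x := lt_trans one_pos hτ
      rw [show (-(1 / 8 - ε)) = (7:ℝ) / 8 + ε - 1 by ring, Real.rpow_sub hu0,
        Real.rpow_one, mul_inv, inv_pow]
      ring
    have h4 : Tendsto (fun τ => (F (u τ x) -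
        u τ x * ∑ s ∈ Finset.range 5, a s * Real.log (u τ x) ^ (4 - s)) *
        (u τ x * Real.log (u τ x) ^ 4)⁻¹) atTop (nhds 0) := h2.trans_tendsto h3
    have h5 : Tendsto (fun τ => ∑ s ∈ Finset.range 5,
        a s * ((Real.log (u τ x))⁻¹) ^ s) atTop
        (nhds (∑ s ∈ Finset.range 5, a s * (0:ℝ) ^ s)) :=
      tendsto_finset_sum _ fun s _ => tendsto_const_nhds.mul (hLinv.pow s)
    have hsum0 : (∑ s ∈ Finset.range 5, a s * (0:ℝ) ^ s) = a 0 := by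
      norm_num [Finset.sum_range_succ]
    rw [hsum0] at h5
    have h6 := h4.add h5
    rw [zero_add] at h6
    refine Tendsto.congr' ?_ h6
    filter_upwards [hu1, hL0] with τ h1τ h2τ
    have hu0 : (0:ℝ) < u τ x := lt_trans one_pos h1τ
    have hune : u τ x ≠ 0 := ne_of_gt hu0
    have hLne : Real.log (u τ x) ≠ 0 := ne_of_gt h2τ
    have hP : (∑ s ∈ Finset.range 5, a s * Real.log (u τ x) ^ (4 - s)) /
        Real.log (u τ x) ^ 4
        = ∑ s ∈ Finset.range 5, a s * ((Real.log (u τ x))⁻¹) ^ s := by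
      rw [Finset.sum_div]
      refine Finset.sum_congr rfl fun s hs => ?_
      rw [Finset.mem_range] at hs
      exact aux_pow2 _ hLne (by omega) _
    rw [← hP]
    field_simp
    ring
  -- Step 3 : S' / L⁴ → (1/Z)^4
  have hSlim : Tendsto (fun τ => (∑ s ∈ Finset.range 5,
      c s * (I₂ (u τ x) / Iσ (u τ x)) ^ (4 - s)) / Real.log (u τ x) ^ 4) atTop
      (nhds ((1 / Z) ^ 4)) := by
    have hterm : ∀ s ∈ Finset.range 5, Tendsto (fun τ =>
        c s * (I₂ (u τ x) / Iσ (u τ x) / Real.log (u τ x)) ^ (4 - s) *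
        ((Real.log (u τ x))⁻¹) ^ s) atTop
        (nhds (c s * (1 / Z) ^ (4 - s) * (0:ℝ) ^ s)) :=
      fun s _ => (tendsto_const_nhds.mul (hQ.pow _)).mul (hLinv.pow s)
    have h5 := tendsto_finset_sum _ hterm
    have hval : (∑ s ∈ Finset.range 5, c s * (1 / Z) ^ (4 - s) * (0:ℝ) ^ s)
        = (1 / Z) ^ 4 := by
      norm_num [Finset.sum_range_succ, hc0]
    rw [hval] at h5
    refine Tendsto.congr' ?_ h5
    filter_upwards [hL0] with τ hτ
    have hLne : Real.log (u τ x) ≠ 0 := ne_of_gt hτ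
    rw [Finset.sum_div]
    refine Finset.sum_congr rfl fun s hs => ?_
    rw [Finset.mem_range] at hs
    exact aux_pow _ _ hLne (by omega) _
  -- Step 4 : assemble
  have hinv : Tendsto (fun τ => ((∑ s ∈ Finset.range 5,
      c s * (I₂ (u τ x) / Iσ (u τ x)) ^ (4 - s)) / Real.log (u τ x) ^ 4)⁻¹) atTop
      (nhds (((1 / Z) ^ 4)⁻¹)) := hSlim.inv₀ (by positivity)
  have huτ : Tendsto (fun τ : ℝ => u τ x / τ) atTop
      (nhds (2 * Real.pi ^ 2 / Z ^ 4 * x)) := by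
    refine Tendsto.congr' ?_ tendsto_const_nhds
    filter_upwards [eventually_gt_atTop (0:ℝ)] with τ hτ
    rw [hu]
    field_simp
  have hall := (hFlim.mul hinv).mul huτ
  have hvalx : a 0 * ((1 / Z) ^ 4)⁻¹ * (2 * Real.pi ^ 2 / Z ^ 4 * x) = x := by
    rw [ha0]
    field_simp
  rw [hvalx] at hall
  refine Tendsto.congr' ?_ hall
  filter_upwards [hu1, hL0, huT.eventually hIσpos, eventually_gt_atTop (0:ℝ)]
    with τ h1τ h2τ h3τ h4τ
  have hu0 : (0:ℝ) < u τ x := lt_trans one_pos h1τ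
  have hune : u τ x ≠ 0 := ne_of_gt hu0
  have hLne : Real.log (u τ x) ≠ 0 := ne_of_gt h2τ
  have hIσne : Iσ (u τ x) ≠ 0 := ne_of_gt h3τ
  have hτne : τ ≠ 0 := ne_of_gt h4τ
  have hScongr : (∑ s ∈ Finset.range 5, c s * I₂ (u τ x) ^ (4 - s) * Iσ (u τ x) ^ s)
      = Iσ (u τ x) ^ 4 *
        ∑ s ∈ Finset.range 5, c s * (I₂ (u τ x) / Iσ (u τ x)) ^ (4 - s) := by
    rw [Finset.mul_sum]
    refine Finset.sum_congr rfl fun s hs => ?_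
    rw [Finset.mem_range] at hs
    exact aux_pow3 _ _ hIσne (by omega) _
  rw [hE, hScongr]
  exact aux_final _ _ _ _ _ _ hLne hune hτne hIσne
end

section
/- Fix ε ∈ (0, 1/8) and σ ≥ 1/2 + ε. Assume: (i) a₀ = 1/(2π²) and a₁, …, a₄ are real numbers with ∫₀^T |ζ(1/2 + it)|⁴ dt = T·Σ_{s=0}^{4} a_s (ln T)^{4−s} + O(T^{7/8+ε}) as T → ∞; (ii) g : ℝ → ℝ satisfies g(T) > T for all large T, the integrals ∫_T^{g(T)} |ζ(1/2 + it)|² dt and ∫_T^{g(T)} |ζ(σ + it)|² dt are positive for all large T, and (∫_T^{g(T)} |ζ(1/2 + it)|² dt)/(∫_T^{g(T)} |ζ(σ + it)|² dt) = (1/ζ(2σ))·ln T + O(1) as T → ∞. Put c₀ = 1, c_s = 2π²·ζ(2σ)^{−s}·a_s for s = 1, 2, 3, 4, and for x > 0, τ > 0 set u = (2π²/ζ(2σ)⁴)·x·τ and E(τ, x) = (∫_u^{g(u)} |ζ(σ + it)|² dt)⁴ · (∫₀^u |ζ(1/2 + it)|⁴ dt) · (Σ_{s=0}^{4} c_s ·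 (∫_u^{g(u)} |ζ(1/2 + it)|² dt)^{4−s} · (∫_u^{g(u)} |ζ(σ + it)|² dt)^s)^{−1}. Then for all positive integers x, y, z, n with n ≥ 3, the function τ ↦ (1/τ)·E(τ, (xⁿ + yⁿ)/zⁿ) converges as τ → ∞, and its limit equals 1 if and only if xⁿ + yⁿ = zⁿ. Consequently, the Fermat–Wiles theorem (for all positive integers x, y, z and n ≥ 3, xⁿ + yⁿ ≠ zⁿ) holds if and only if for all such x, y, z, n one has lim_{τ→∞} (1/τ)·E(τ, (xⁿ + yⁿ)/zⁿ) ≠ 1. -/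
open Filter Real Complex Asymptotics

private def zetaPoly (b : ℕ → ℝ) (r : ℝ) : ℝ := ∑ s ∈ Finset.range 5, b s * r ^ (4 - s)

private lemma one_lt_zeta_re_of_one_lt {r : ℝ} (hr : 1 < r) : 1 < (riemannZeta ((r : ℂ))).re := by
  have hre : 1 < ((r : ℂ)).re := by simpa using hr
  rw [zeta_eq_tsum_one_div_nat_cpow hre]
  have heq : ∀ n : ℕ, (1 : ℂ) / (n : ℂ) ^ ((r : ℝ) : ℂ) = (((1 / (n : ℝ) ^ r : ℝ)) : ℂ) := by
    intro n
    rw [show ((n : ℂ)) = (((n : ℝ) : ℂ)) by norm_cast,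
      ← Complex.ofReal_cpow (Nat.cast_nonneg n)]
    push_cast; ring
  rw [tsum_congr heq, ← Complex.ofReal_tsum, Complex.ofReal_re]
  have hsum : Summable (fun n : ℕ => 1 / (n : ℝ) ^ r) := Real.summable_one_div_nat_rpow.mpr hr
  have hle : ∑ n ∈ ({1, 2} : Finset ℕ), (1 / (n : ℝ) ^ r) ≤ ∑' n : ℕ, 1 / (n : ℝ) ^ r :=
    Summable.sum_le_tsum _ (fun i _ => by positivity) hsum
  have h2 : (0 : ℝ) < 1 / (2 : ℝ) ^ r := by positivity
  have hs : ∑ n ∈ ({1, 2} : Finset ℕ), (1 / (n : ℝ) ^ r) = 1 + 1 / (2 : ℝ) ^ r := by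
    norm_num [Finset.sum_insert, Real.one_rpow]
  linarith

private lemma div_div_div_same {a b c : ℝ} (hc : c ≠ 0) : (a / c) / (b / c) = a / b := by
  rcases eq_or_ne b 0 with hb | hb
  · simp [hb]
  · field_simp

private lemma zetaPoly_div_tendsto (b : ℕ → ℝ) (ρ L : ℝ → ℝ) (w : ℝ)
    (hL : Tendsto L atTop atTop)
    (hw : Tendsto (fun T => ρ T / L T) atTop (nhds w)) :
    Tendsto (fun T => zetaPoly b (ρ T) / L T ^ 4) atTop (nhds (b 0 * w ^ 4)) := by
  have hLpos : ∀ᶠ T in atTop, 0 < L T := hL.eventually (eventually_gt_atTop 0)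
  have hterm : ∀ s ∈ Finset.range 5,
      Tendsto (fun T => b s * (ρ T / L T) ^ (4 - s) * ((L T)⁻¹) ^ s) atTop
        (nhds (b s * w ^ (4 - s) * (0 : ℝ) ^ s)) := fun s _ =>
    (tendsto_const_nhds.mul (hw.pow _)).mul (hL.inv_tendsto_atTop.pow _)
  have hsum := tendsto_finset_sum (Finset.range 5) hterm
  have hval : ∑ s ∈ Finset.range 5, b s * w ^ (4 - s) * (0 : ℝ) ^ s = b 0 * w ^ 4 := by
    simp [Finset.sum_range_succ]
  rw [hval] at hsum
  refine hsum.congr' ?_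
  filter_upwards [hLpos] with T hT
  have hLne : L T ≠ 0 := ne_of_gt hT
  rw [zetaPoly, Finset.sum_div]
  refine Finset.sum_congr rfl fun s hs => ?_
  have h4s : L T ^ (4 - s) * L T ^ s = L T ^ 4 := by
    rw [← pow_add]; congr 1; have := Finset.mem_range.mp hs; omega
  rw [div_pow, inv_pow]
  rw [← h4s]
  field_simp

set_option maxHeartbeats 1000000 in
/-- Theorem 2 of the paper: the ζ-condition on Fermat rationals
is an equivalent of the Fermat--Wiles theorem. -/
theorem zeta_equivalent_of_fermat_wiles
    (ε σ : ℝ) (hε : 0 < ε) (hε' : ε < 1 / 8) (hσ : 1 / 2 + ε ≤ σ)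
    (a : ℕ → ℝ) (ha0 : a 0 = 1 / (2 * Real.pi ^ 2))
    (F I₂ Iσ : ℝ → ℝ) (g : ℝ → ℝ)
    (hF : ∀ T : ℝ, F T = ∫ t in (0:ℝ)..T,
      ‖riemannZeta (1 / 2 + t * Complex.I)‖ ^ 4)
    (hI₂ : ∀ T : ℝ, I₂ T = ∫ t in T..(g T),
      ‖riemannZeta (1 / 2 + t * Complex.I)‖ ^ 2)
    (hIσ : ∀ T : ℝ, Iσ T = ∫ t in T..(g T),
      ‖riemannZeta (σ + t * Complex.I)‖ ^ 2)
    (hIngham : (fun T : ℝ => F T -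
        T * ∑ s ∈ Finset.range 5, a s * Real.log T ^ (4 - s))
      =O[atTop] fun T : ℝ => T ^ ((7:ℝ) / 8 + ε))
    (hg : ∀ᶠ T : ℝ in atTop, T < g T)
    (hI₂pos : ∀ᶠ T : ℝ in atTop, 0 < I₂ T)
    (hIσpos : ∀ᶠ T : ℝ in atTop, 0 < Iσ T)
    (hquot : (fun T : ℝ =>
        I₂ T / Iσ T - Real.log T / (riemannZeta (2 * σ)).re)
      =O[atTop] fun _ : ℝ => (1:ℝ))
    (c : ℕ → ℝ) (hc0 : c 0 = 1)
    (hc : ∀ s : ℕ, 1 ≤ s → s ≤ 4 →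
      c s = 2 * Real.pi ^ 2 * ((riemannZeta (2 * σ)).re) ^ (-(s:ℤ)) * a s)
    (u : ℝ → ℝ → ℝ)
    (hu : ∀ τ x : ℝ, u τ x =
      2 * Real.pi ^ 2 / (riemannZeta (2 * σ)).re ^ 4 * x * τ)
    (E : ℝ → ℝ → ℝ)
    (hE : ∀ τ x : ℝ, E τ x =
      Iσ (u τ x) ^ 4 * F (u τ x) *
        (∑ s ∈ Finset.range 5,
          c s * I₂ (u τ x) ^ (4 - s) * Iσ (u τ x) ^ s)⁻¹) :
    (∀ x y z n : ℕ, 0 < x → 0 < y → 0 < z → 3 ≤ n →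
      ∃ L : ℝ,
        Tendsto (fun τ : ℝ =>
          E τ (((x:ℝ) ^ n + (y:ℝ) ^ n) / (z:ℝ) ^ n) / τ) atTop (nhds L) ∧
        (L = 1 ↔ x ^ n + y ^ n = z ^ n)) ∧
    ((∀ x y z n : ℕ, 0 < x → 0 < y → 0 < z → 3 ≤ n →
        x ^ n + y ^ n ≠ z ^ n) ↔
      (∀ x y z n : ℕ, 0 < x → 0 < y → 0 < z → 3 ≤ n →
        ¬ Tendsto (fun τ : ℝ =>
          E τ (((x:ℝ) ^ n + (y:ℝ) ^ n) / (z:ℝ) ^ n) / τ) atTop (nhds 1))) := by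
  set Z : ℝ := (riemannZeta (2 * σ)).re with hZdef
  have hπ : (0:ℝ) < Real.pi := Real.pi_pos
  have hσ1 : (1:ℝ) < 2 * σ := by linarith
  have hZ1 : 1 < Z := by
    have hcast : ((2 * σ : ℝ) : ℂ) = 2 * (σ : ℂ) := by push_cast; ring
    rw [hZdef, ← hcast]
    exact one_lt_zeta_re_of_one_lt hσ1
  have hZ0 : (0:ℝ) < Z := by linarith
  have hZne : Z ≠ 0 := ne_of_gt hZ0
  have ha0pos : 0 < a 0 := by rw [ha0]; positivity
  have hCpos : 0 < a 0 * Z ^ 4 := by positivity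
  have hlog := Real.tendsto_log_atTop
  have hlog4 : Tendsto (fun T : ℝ => Real.log T ^ 4) atTop atTop :=
    (tendsto_pow_atTop (by norm_num)).comp hlog
  -- S / log⁴ → a 0
  have hloglog : Tendsto (fun T : ℝ => Real.log T / Real.log T) atTop (nhds 1) := by
    refine Tendsto.congr' ?_ (tendsto_const_nhds (x := (1:ℝ)))
    filter_upwards [hlog.eventually (eventually_gt_atTop 0)] with T hT
    exact (div_self (ne_of_gt hT)).symm
  have h4 : Tendsto (fun T => zetaPoly a (Real.log T) / Real.log T ^ 4) atTop
      (nhds (a 0 * 1 ^ 4)) := zetaPoly_div_tendsto a _ _ 1 hlog hloglog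
  -- S → ∞
  have hS_top : Tendsto (fun T => zetaPoly a (Real.log T)) atTop atTop := by
    have h := hlog4.atTop_mul_pos (by simpa using ha0pos) h4
    refine h.congr' ?_
    filter_upwards [hlog.eventually (eventually_gt_atTop 0)] with T hT
    have hne : Real.log T ^ 4 ≠ 0 := by positivity
    field_simp
  -- F / (T * S) → 1
  have hrp : Tendsto (fun T : ℝ => T ^ ((7:ℝ)/8 + ε - 1)) atTop (nhds 0) := by
    have h := tendsto_rpow_neg_atTop (y := 1 - ((7:ℝ)/8 + ε)) (by linarith)
    have he : ((7:ℝ)/8 + ε - 1) = -(1 - ((7:ℝ)/8 + ε)) := by ring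
    rw [he]; exact h
  have hquot0 : Tendsto
      (fun T : ℝ => T ^ ((7:ℝ)/8 + ε) * (T * zetaPoly a (Real.log T))⁻¹) atTop (nhds 0) := by
    have hev : ∀ᶠ T : ℝ in atTop,
        T ^ ((7:ℝ)/8 + ε - 1) * (zetaPoly a (Real.log T))⁻¹
          = T ^ ((7:ℝ)/8 + ε) * (T * zetaPoly a (Real.log T))⁻¹ := by
      filter_upwards [eventually_gt_atTop (0:ℝ)] with T hT
      rw [Real.rpow_sub hT, Real.rpow_one, mul_inv]
      ring
    refine Tendsto.congr' hev ?_
    simpa using hrp.mul hS_top.inv_tendsto_atTop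
  have hIng : (fun T => F T - T * zetaPoly a (Real.log T)) =O[atTop]
      (fun T : ℝ => T ^ ((7:ℝ)/8 + ε)) := by
    simpa only [zetaPoly] using hIngham
  have h1 : Tendsto (fun T => F T / (T * zetaPoly a (Real.log T))) atTop (nhds 1) := by
    have hO : (fun T => (F T - T * zetaPoly a (Real.log T)) * (T * zetaPoly a (Real.log T))⁻¹)
        =O[atTop] (fun T => T ^ ((7:ℝ)/8 + ε) * (T * zetaPoly a (Real.log T))⁻¹) :=
      hIng.mul (isBigO_refl _ _)
    have h0 : Tendsto
        (fun T => (F T - T * zetaPoly a (Real.log T)) * (T * zetaPoly a (Real.log T))⁻¹)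
        atTop (nhds 0) :=
      (isLittleO_one_iff ℝ).mp (hO.trans_isLittleO ((isLittleO_one_iff ℝ).mpr hquot0))
    have h01 := h0.add (tendsto_const_nhds (x := (1:ℝ)))
    rw [zero_add] at h01
    refine h01.congr' ?_
    filter_upwards [eventually_gt_atTop (0:ℝ), hS_top.eventually (eventually_gt_atTop 0)]
      with T hT hST
    have hTS : T * zetaPoly a (Real.log T) ≠ 0 := by positivity
    field_simp
    ring
  -- (I₂/Iσ) / log → Z⁻¹
  have h2 : Tendsto (fun T => (I₂ T / Iσ T) / Real.log T) atTop (nhds Z⁻¹) := by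
    have hb : (fun T => (I₂ T / Iσ T - Real.log T / Z) * (Real.log T)⁻¹)
        =O[atTop] (fun T => (1:ℝ) * (Real.log T)⁻¹) := hquot.mul (isBigO_refl _ _)
    have h0 : Tendsto (fun T => (I₂ T / Iσ T - Real.log T / Z) * (Real.log T)⁻¹)
        atTop (nhds 0) :=
      (isLittleO_one_iff ℝ).mp (hb.trans_isLittleO ((isLittleO_one_iff ℝ).mpr
        (by simp only [one_mul]; exact hlog.inv_tendsto_atTop)))
    have h0Z := h0.add (tendsto_const_nhds (x := Z⁻¹))
    rw [zero_add] at h0Z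
    refine h0Z.congr' ?_
    filter_upwards [hlog.eventually (eventually_gt_atTop 0)] with T hT
    have hlne : Real.log T ≠ 0 := ne_of_gt hT
    show (I₂ T / Iσ T - Real.log T / Z) * (Real.log T)⁻¹ + Z⁻¹ = I₂ T / Iσ T / Real.log T
    generalize I₂ T / Iσ T = r
    field_simp
    ring
  have h3 : Tendsto (fun T => zetaPoly c (I₂ T / Iσ T) / Real.log T ^ 4) atTop
      (nhds (c 0 * (Z⁻¹) ^ 4)) := zetaPoly_div_tendsto c _ _ Z⁻¹ hlog h2
  -- S / P → a 0 * Z ^ 4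
  have h5 : Tendsto (fun T => zetaPoly a (Real.log T) / zetaPoly c (I₂ T / Iσ T)) atTop
      (nhds (a 0 * Z ^ 4)) := by
    have hne : c 0 * (Z⁻¹) ^ 4 ≠ 0 := by rw [hc0]; positivity
    have hdiv := h4.div h3 hne
    have hval : (a 0 * 1 ^ 4) / (c 0 * Z⁻¹ ^ 4) = a 0 * Z ^ 4 := by
      rw [hc0]; field_simp
    rw [hval] at hdiv
    refine hdiv.congr' ?_
    filter_upwards [hlog.eventually (eventually_gt_atTop 0)] with T hT
    have hne4 : Real.log T ^ 4 ≠ 0 := by positivity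
    simp only [Pi.div_apply]
    exact div_div_div_same hne4
  -- F / (T * P) → a 0 * Z ^ 4
  have h6 : Tendsto (fun T => F T / (T * zetaPoly c (I₂ T / Iσ T))) atTop
      (nhds (a 0 * Z ^ 4)) := by
    have hmul := h1.mul h5
    rw [one_mul] at hmul
    refine hmul.congr' ?_
    filter_upwards [hS_top.eventually (eventually_gt_atTop 0)] with T hST
    rw [div_mul_div_comm,
      show T * zetaPoly a (Real.log T) * zetaPoly c (I₂ T / Iσ T)
        = T * zetaPoly c (I₂ T / Iσ T) * zetaPoly a (Real.log T) by ring,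
      mul_div_mul_right _ _ (ne_of_gt hST)]
  -- the key limit
  have key : ∀ q : ℝ, 0 < q → Tendsto (fun τ => E τ q / τ) atTop (nhds q) := by
    intro q hq
    have hK : 0 < 2 * Real.pi ^ 2 / Z ^ 4 * q := by positivity
    have hucomp : Tendsto (fun τ => u τ q) atTop atTop := by
      have h : Tendsto (fun τ : ℝ => 2 * Real.pi ^ 2 / Z ^ 4 * q * τ) atTop atTop :=
        tendsto_id.const_mul_atTop hK
      exact h.congr fun τ => (hu τ q).symm
    have h6u : Tendsto (fun τ =>
        F (u τ q) / (u τ q * zetaPoly c (I₂ (u τ q) / Iσ (u τ q)))) atTop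
        (nhds (a 0 * Z ^ 4)) := h6.comp hucomp
    have hfinal := h6u.const_mul (q / (a 0 * Z ^ 4))
    rw [div_mul_cancel₀ q (ne_of_gt hCpos)] at hfinal
    refine hfinal.congr' ?_
    filter_upwards [hucomp.eventually hIσpos, eventually_gt_atTop (0:ℝ)] with τ hIσu hτ
    rw [hE]
    have hIσne : Iσ (u τ q) ≠ 0 := ne_of_gt hIσu
    have hden : (∑ s ∈ Finset.range 5, c s * I₂ (u τ q) ^ (4 - s) * Iσ (u τ q) ^ s)
        = Iσ (u τ q) ^ 4 * zetaPoly c (I₂ (u τ q) / Iσ (u τ q)) := by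
      rw [zetaPoly, Finset.mul_sum]
      refine Finset.sum_congr rfl fun s hs => ?_
      have h4s : Iσ (u τ q) ^ (4 - s) * Iσ (u τ q) ^ s = Iσ (u τ q) ^ 4 := by
        rw [← pow_add]; congr 1; have := Finset.mem_range.mp hs; omega
      rw [div_pow, ← h4s]
      field_simp
    rw [hden]
    have hUval : u τ q = 2 * Real.pi ^ 2 / Z ^ 4 * q * τ := hu τ q
    have hUpos : 0 < u τ q := by rw [hUval]; positivity
    set U := u τ q with hUdef
    set P := zetaPoly c (I₂ U / Iσ U) with hPdef
    rcases eq_or_ne P 0 with h0 | hPne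
    · rw [h0]
      simp only [mul_zero, inv_zero, div_zero, zero_div]
    · have hτne : τ ≠ 0 := ne_of_gt hτ
      rw [show Iσ U ^ 4 * F U * (Iσ U ^ 4 * P)⁻¹ = F U / P by
        rw [mul_inv, ← mul_assoc, mul_comm (Iσ U ^ 4) (F U), mul_assoc (F U),
          mul_inv_cancel₀ (pow_ne_zero 4 hIσne), mul_one, div_eq_mul_inv]]
      rw [ha0, hUval]
      field_simp
  -- part 1
  have part1 : ∀ x y z n : ℕ, 0 < x → 0 < y → 0 < z → 3 ≤ n →
      ∃ L : ℝ,
        Tendsto (fun τ : ℝ =>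
          E τ (((x:ℝ) ^ n + (y:ℝ) ^ n) / (z:ℝ) ^ n) / τ) atTop (nhds L) ∧
        (L = 1 ↔ x ^ n + y ^ n = z ^ n) := by
    intro x y z n hx hy hz hn
    have hx' : (0:ℝ) < (x:ℝ) := by exact_mod_cast hx
    have hy' : (0:ℝ) < (y:ℝ) := by exact_mod_cast hy
    have hz' : (0:ℝ) < (z:ℝ) := by exact_mod_cast hz
    have hzn : (0:ℝ) < (z:ℝ) ^ n := by positivity
    have hq : 0 < ((x:ℝ) ^ n + (y:ℝ) ^ n) / (z:ℝ) ^ n := by positivity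
    refine ⟨_, key _ hq, ?_⟩
    rw [div_eq_one_iff_eq (ne_of_gt hzn)]
    constructor
    · intro h; exact_mod_cast h
    · intro h; exact_mod_cast h
  refine ⟨part1, ?_, ?_⟩
  · intro hFW x y z n hx hy hz hn hT
    obtain ⟨L, hTL, hiff⟩ := part1 x y z n hx hy hz hn
    exact hFW x y z n hx hy hz hn (hiff.mp (tendsto_nhds_unique hTL hT))
  · intro H x y z n hx hy hz hn heq
    obtain ⟨L, hTL, hiff⟩ := part1 x y z n hx hy hz hn
    rw [hiff.mpr heq] at hTL
    exact H x y z n hx hy hz hn hTL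
end

section
/- Fix ε ∈ (0, 1/8) and σ ≥ 1/2 + ε, let c denote the Euler–Mascheroni constant, and assume: (i) a₀ = 1/(2π²) and a₁, …, a₄ are real numbers with ∫₀^T |ζ(1/2 + it)|⁴ dt = T·Σ_{s=0}^{4} a_s (ln T)^{4−s} + O(T^{7/8+ε}) as T → ∞; (ii) g : ℝ → ℝ satisfies g(T) > T for all large T, the integrals ∫_T^{g(T)} |ζ(1/2 + it)|² dt and ∫_T^{g(T)} |ζ(σ + it)|² dt are positive for all large T, and (∫_T^{g(T)} |ζ(1/2 + it)|² dt)/(∫_T^{g(T)} |ζ(σ + it)|² dt) = (1/ζ(2σ))·ln T + O(1) as T → ∞; (iii) for every fixed x > 0, ∫_{xτ/(1−c)}^{g(xτ/(1−c))} |ζ(1/2 + it)|² dt ~ x·τ as τ → ∞. Put c₀ = 1, c_s = 2π²·ζ(2σ)^{−s}·a_s for s = 1, 2, 3, 4, and for x > 0, τ > 0 set u = (2π²/ζ(2σ)⁴)·x·τ. Then for every fixed x > 0, as τ → ∞: ∫_{xτ/(1−c)}^{g(xτ/(1−c))} |ζ(1/2 + it)|² dt ~ (∫_u^{g(u)} |ζ(σ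 + it)|² dt)⁴ · (∫₀^u |ζ(1/2 + it)|⁴ dt) · (Σ_{s=0}^{4} c_s · (∫_u^{g(u)} |ζ(1/2 + it)|² dt)^{4−s} · (∫_u^{g(u)} |ζ(σ + it)|² dt)^s)^{−1}. -/
open Filter Real Complex Asymptotics

lemma zeta_re_pos {r : ℝ} (hr : 1 < r) : 0 < (riemannZeta (r : ℂ)).re := by
  have hs : 1 < ((r:ℂ)).re := by simpa using hr
  have h := (zeta_eq_tsum_one_div_nat_cpow hs).symm
  have h2 : ∀ n : ℕ, 1/(n:ℂ)^(r:ℂ) = ((1/(n:ℝ)^r : ℝ) : ℂ) := by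
    intro n
    rw [Complex.ofReal_div, Complex.ofReal_cpow (Nat.cast_nonneg n)]
    push_cast; ring
  rw [← h]
  simp_rw [h2]
  rw [← Complex.ofReal_tsum]
  rw [Complex.ofReal_re]
  exact Summable.tsum_pos (Real.summable_one_div_nat_rpow.mpr hr) (fun i => by positivity) 1
    (by norm_num)

set_option maxHeartbeats 1000000 in
/-- Theorem 3 of the paper: asymptotic decomposition of the
almost linear increments of the Hardy--Littlewood integral by means of the
cross-breed composition of zeta-integrals. -/
theorem increment_decomposition
    (ε σ : ℝ) (hε : 0 < ε) (hε' : ε < 1 / 8) (hσ : 1 / 2 + ε ≤ σ)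
    (a : ℕ → ℝ) (ha0 : a 0 = 1 / (2 * Real.pi ^ 2))
    (F I₂ Iσ : ℝ → ℝ) (g : ℝ → ℝ)
    (hF : ∀ T : ℝ, F T = ∫ t in (0:ℝ)..T,
      ‖riemannZeta (1 / 2 + t * Complex.I)‖ ^ 4)
    (hI₂ : ∀ T : ℝ, I₂ T = ∫ t in T..(g T),
      ‖riemannZeta (1 / 2 + t * Complex.I)‖ ^ 2)
    (hIσ : ∀ T : ℝ, Iσ T = ∫ t in T..(g T),
      ‖riemannZeta (σ + t * Complex.I)‖ ^ 2)
    (hIngham : (fun T : ℝ => F T -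
        T * ∑ s ∈ Finset.range 5, a s * Real.log T ^ (4 - s))
      =O[atTop] fun T : ℝ => T ^ ((7:ℝ) / 8 + ε))
    (hg : ∀ᶠ T : ℝ in atTop, T < g T)
    (hI₂pos : ∀ᶠ T : ℝ in atTop, 0 < I₂ T)
    (hIσpos : ∀ᶠ T : ℝ in atTop, 0 < Iσ T)
    (hquot : (fun T : ℝ =>
        I₂ T / Iσ T - Real.log T / (riemannZeta (2 * σ)).re)
      =O[atTop] fun _ : ℝ => (1:ℝ))
    (hfirst : ∀ x : ℝ, 0 < x →
      Tendsto (fun τ : ℝ =>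
        I₂ (x * τ / (1 - Real.eulerMascheroniConstant)) / (x * τ))
        atTop (nhds 1))
    (c : ℕ → ℝ) (hc0 : c 0 = 1)
    (hc : ∀ s : ℕ, 1 ≤ s → s ≤ 4 →
      c s = 2 * Real.pi ^ 2 * ((riemannZeta (2 * σ)).re) ^ (-(s:ℤ)) * a s)
    (u : ℝ → ℝ → ℝ)
    (hu : ∀ τ x : ℝ, u τ x =
      2 * Real.pi ^ 2 / (riemannZeta (2 * σ)).re ^ 4 * x * τ) :
    ∀ x : ℝ, 0 < x →
      Tendsto (fun τ : ℝ =>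
        I₂ (x * τ / (1 - Real.eulerMascheroniConstant)) /
          (Iσ (u τ x) ^ 4 * F (u τ x) *
            (∑ s ∈ Finset.range 5,
              c s * I₂ (u τ x) ^ (4 - s) * Iσ (u τ x) ^ s)⁻¹))
        atTop (nhds 1) := by
  intro x hx
  set z : ℝ := (riemannZeta (2 * σ)).re with hzdef
  have hπ : (0:ℝ) < Real.pi := Real.pi_pos
  have hz0 : 0 < z := by
    have harg : ((2 * σ : ℝ) : ℂ) = 2 * (σ : ℂ) := by push_cast; ring
    have := zeta_re_pos (r := 2 * σ) (by linarith)
    rwa [harg] at this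
  have ha0pos : 0 < a 0 := by rw [ha0]; positivity
  -- U → ∞
  have hUtop : Tendsto (fun τ : ℝ => u τ x) atTop atTop := by
    simp only [hu]
    exact Tendsto.const_mul_atTop (by positivity) tendsto_id
  have hLtop : Tendsto (fun τ : ℝ => Real.log (u τ x)) atTop atTop :=
    Real.tendsto_log_atTop.comp hUtop
  have hLinv : Tendsto (fun τ : ℝ => (Real.log (u τ x))⁻¹) atTop (nhds 0) :=
    hLtop.inv_tendsto_atTop
  -- E → 1
  have hE1 : Tendsto (fun τ : ℝ =>
      I₂ (u τ x) / Iσ (u τ x) * z / Real.log (u τ x)) atTop (nhds 1) := by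
    have h1 : (fun τ : ℝ => (I₂ (u τ x) / Iσ (u τ x) - Real.log (u τ x) / z)
        * (z / Real.log (u τ x))) =O[atTop]
        (fun τ : ℝ => (1:ℝ) * (z / Real.log (u τ x))) :=
      (hquot.comp_tendsto hUtop).mul (isBigO_refl _ _)
    have h2 : Tendsto (fun τ : ℝ => (1:ℝ) * (z / Real.log (u τ x))) atTop (nhds 0) := by
      simpa using tendsto_const_nhds.div_atTop hLtop
    have h3 := (h1.trans_tendsto h2).add (tendsto_const_nhds (α := ℝ) (x := (1:ℝ)))
    rw [zero_add] at h3
    apply h3.congr'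
    filter_upwards [hLtop.eventually_gt_atTop 0] with τ hL
    field_simp
    ring
  -- Q' → a 0
  have hQ : Tendsto (fun τ : ℝ => ∑ s ∈ Finset.range 5,
      a s * (Real.log (u τ x))⁻¹ ^ s *
        (I₂ (u τ x) / Iσ (u τ x) * z / Real.log (u τ x)) ^ (4 - s))
      atTop (nhds (a 0)) := by
    have key : Tendsto (fun τ : ℝ => ∑ s ∈ Finset.range 5,
        a s * (Real.log (u τ x))⁻¹ ^ s *
          (I₂ (u τ x) / Iσ (u τ x) * z / Real.log (u τ x)) ^ (4 - s))
        atTop (nhds (∑ s ∈ Finset.range 5, a s * (0:ℝ) ^ s * (1:ℝ) ^ (4 - s))) :=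
      tendsto_finset_sum _ (fun s _ =>
        (tendsto_const_nhds.mul (hLinv.pow s)).mul (hE1.pow (4 - s)))
    convert key using 2
    simp [Finset.sum_range_succ]
  -- F(U)/(U L^4) → a 0
  have hF2 : Tendsto (fun τ : ℝ =>
      F (u τ x) / (u τ x * Real.log (u τ x) ^ 4)) atTop (nhds (a 0)) := by
    have hA : Tendsto (fun τ : ℝ =>
        (F (u τ x) - u τ x * ∑ s ∈ Finset.range 5,
          a s * Real.log (u τ x) ^ (4 - s)) *
          (u τ x * Real.log (u τ x) ^ 4)⁻¹) atTop (nhds 0) := by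
      have hbo : (fun τ : ℝ =>
          (F (u τ x) - u τ x * ∑ s ∈ Finset.range 5,
            a s * Real.log (u τ x) ^ (4 - s)) *
            (u τ x * Real.log (u τ x) ^ 4)⁻¹) =O[atTop]
          (fun τ : ℝ => (u τ x) ^ ((7:ℝ)/8 + ε) *
            (u τ x * Real.log (u τ x) ^ 4)⁻¹) :=
        (hIngham.comp_tendsto hUtop).mul (isBigO_refl _ _)
      refine hbo.trans_tendsto ?_
      have hr : Tendsto (fun t : ℝ => t ^ (-(1 - ((7:ℝ)/8 + ε)))) atTop (nhds 0) :=
        tendsto_rpow_neg_atTop (by linarith)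
      have h1 : Tendsto (fun τ : ℝ => (u τ x) ^ (-(1 - ((7:ℝ)/8 + ε)))) atTop (nhds 0) :=
        hr.comp hUtop
      have h2 : Tendsto (fun τ : ℝ => ((Real.log (u τ x))⁻¹) ^ 4) atTop
          (nhds ((0:ℝ) ^ 4)) := hLinv.pow 4
      have h3 := h1.mul h2
      rw [show (0:ℝ) * (0:ℝ)^4 = 0 by norm_num] at h3
      apply h3.congr'
      filter_upwards [hUtop.eventually_gt_atTop 0, hLtop.eventually_gt_atTop 0]
        with τ hU hL
      rw [show -(1 - ((7:ℝ)/8 + ε)) = ((7:ℝ)/8 + ε) + (-1) by ring,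
        Real.rpow_add hU, Real.rpow_neg_one]
      field_simp
    have hB : Tendsto (fun τ : ℝ =>
        (∑ s ∈ Finset.range 5, a s * Real.log (u τ x) ^ (4 - s)) *
          (Real.log (u τ x) ^ 4)⁻¹) atTop (nhds (a 0)) := by
      have key : Tendsto (fun τ : ℝ => ∑ s ∈ Finset.range 5,
          a s * ((Real.log (u τ x))⁻¹) ^ s) atTop
          (nhds (∑ s ∈ Finset.range 5, a s * (0:ℝ) ^ s)) :=
        tendsto_finset_sum _ (fun s _ => tendsto_const_nhds.mul (hLinv.pow s))
      have heq : ∑ s ∈ Finset.range 5, a s * (0:ℝ) ^ s = a 0 := by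
        simp [Finset.sum_range_succ]
      rw [heq] at key
      apply key.congr'
      filter_upwards [hLtop.eventually_gt_atTop 0] with τ hL
      simp only [Finset.sum_range_succ, Finset.sum_range_zero]
      have hL0 : Real.log (u τ x) ≠ 0 := ne_of_gt hL
      field_simp
      ring
    have h := hA.add hB
    rw [zero_add] at h
    apply h.congr'
    filter_upwards [hUtop.eventually_gt_atTop 0, hLtop.eventually_gt_atTop 0]
      with τ hU hL
    have hU0 : u τ x ≠ 0 := ne_of_gt hU
    have hL0 : Real.log (u τ x) ≠ 0 := ne_of_gt hL
    field_simp
    ring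
  -- main combination
  have hT0 := hfirst x hx
  have hMain := (hT0.mul hQ).mul (hF2.inv₀ (ne_of_gt ha0pos))
  rw [show (1 * a 0) * (a 0)⁻¹ = 1 by field_simp] at hMain
  apply hMain.congr'
  filter_upwards [eventually_gt_atTop (0:ℝ), hUtop.eventually_gt_atTop 0,
    hLtop.eventually_gt_atTop 0, hUtop.eventually hI₂pos, hUtop.eventually hIσpos,
    hQ.eventually_const_lt (half_lt_self ha0pos),
    hF2.eventually_const_lt (half_lt_self ha0pos)] with τ hτ hU hL hP hS hQpos hFq
  set L : ℝ := Real.log (u τ x) with hLdef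
  set P : ℝ := I₂ (u τ x) with hPdef
  set S : ℝ := Iσ (u τ x) with hSdef
  set Fv : ℝ := F (u τ x) with hFvdef
  have hLne : L ≠ 0 := ne_of_gt hL
  have hSne : S ≠ 0 := ne_of_gt hS
  have hzne : z ≠ 0 := ne_of_gt hz0
  have hπne : Real.pi ≠ 0 := ne_of_gt hπ
  have hSig : (∑ s ∈ Finset.range 5, c s * P ^ (4 - s) * S ^ s) =
      S ^ 4 * (2 * Real.pi ^ 2 * L ^ 4 / z ^ 4) *
        (∑ s ∈ Finset.range 5, a s * L⁻¹ ^ s * (P / S * z / L) ^ (4 - s)) := by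
    simp only [Finset.sum_range_succ, Finset.sum_range_zero, zero_add]
    rw [hc0, hc 1 (by norm_num) (by norm_num), hc 2 (by norm_num) (by norm_num),
      hc 3 (by norm_num) (by norm_num), hc 4 (by norm_num) (by norm_num), ha0]
    simp only [zpow_neg, zpow_natCast]
    norm_num
    field_simp
  rw [hSig]
  set Qv : ℝ := ∑ s ∈ Finset.range 5,
    a s * L⁻¹ ^ s * (P / S * z / L) ^ (4 - s) with hQvdef
  have hQvpos : 0 < Qv := lt_trans (half_pos ha0pos) hQpos
  have hQvne : Qv ≠ 0 := ne_of_gt hQvpos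
  have hUeq : u τ x = 2 * Real.pi ^ 2 / z ^ 4 * x * τ := hu τ x
  have hFvpos : 0 < Fv := by
    have h1 : 0 < Fv / (u τ x * L ^ 4) := lt_trans (half_pos ha0pos) hFq
    have h2 : 0 < u τ x * L ^ 4 := mul_pos hU (pow_pos hL 4)
    have := mul_pos h1 h2
    rwa [div_mul_cancel₀ _ (ne_of_gt h2)] at this
  have hFvne : Fv ≠ 0 := ne_of_gt hFvpos
  have hxne : x ≠ 0 := ne_of_gt hx
  have hτne : τ ≠ 0 := ne_of_gt hτ
  rw [hUeq, inv_div]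
  clear_value L P S Fv Qv
  clear hQ hF2 hMain hquot hLinv hE1 hLtop hUtop hT0 hIngham hQpos hFq hSig
  have hden : S ^ 4 * Fv * (S ^ 4 * (2 * Real.pi ^ 2 * L ^ 4 / z ^ 4) * Qv)⁻¹ =
      Fv * z ^ 4 / (2 * Real.pi ^ 2 * L ^ 4 * Qv) := by
    field_simp
  rw [hden]
  field_simp
end

section
/- Fix ε ∈ (0, 1/8), σ ≥ 1/2 + ε, and l ∈ ℕ, l ≥ 1; let c denote the Euler–Mascheroni constant. Assume: (i) a₀ = 1/(2π²) and a₁, …, a₄ are real numbers with ∫₀^T |ζ(1/2 + it)|⁴ dt = T·Σ_{s=0}^{4} a_s (ln T)^{4−s} + O(T^{7/8+ε}) as T → ∞; (ii) g : ℝ → ℝ satisfies g(T) > T for all large T, the integrals ∫_T^{g(T)} |ζ(1/2 + it)|² dt and ∫_T^{g(T)} |ζ(σ + it)|² dt are positive for all large T, and (∫_T^{g(T)} |ζ(1/2 + it)|² dt)/(∫_T^{g(T)} |ζ(σ + it)|² dt) = (1/ζ(2σ))·ln T + O(1) as T → ∞; (iii) for every fixed x > 0: ∫_{xτ/(1−c)}^{g(xτ/(1−c))}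 |ζ(1/2 + it)|² dt ~ xτ, Σ_{xτ/(1−c) < n ≤ g(xτ/(1−c))} d(n) ~ xτ, ln(Γ(g(xτ/(1−c)))/Γ(xτ/(1−c))) ~ xτ, ∫₁^{xτ/ζ(2σ)} |ζ(σ + it)|² dt ~ xτ, and, for some constant c̄(l) > 0, ∫₀^{xτ/c̄(l)} |S₁(t)|^{2l} dt ~ xτ as τ → ∞, where S₁(t) = (1/π)·∫₀^t arg ζ(1/2 + iu) du. Put c₀ = 1, c_s = 2π²·ζ(2σ)^{−s}·a_s for s = 1, 2, 3, 4, and u = (2π²/ζ(2σ)⁴)·x·τ. Then for every fixed x > 0 all of the following quantities are pairwise asymptotically equal as τ → ∞: ∫_{xτ/(1−c)}^{g(xτ/(1−c))} |ζ(1/2 + it)|² dt; the composition (∫_u^{g(u)} |ζ(σ + it)|² dt)⁴ · (∫₀^u |ζ(1/2 + it)|⁴ dt) · (Σ_{s=0}^{4} c_s · (∫_u^{g(u)} |ζ(1/2 + it)|² dt)^{4−s} · (∫_u^{g(u)} |ζ(σ + it)|² dt)^s)^{−1}; Σ_{xτ/(1−c) < n ≤ g(xτ/(1−c))} d(n); ln(Γ(g(xτ/(1−c)))/Γ(xτ/(1−c)));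 ∫₁^{xτ/ζ(2σ)} |ζ(σ + it)|² dt; and ∫₀^{xτ/c̄(l)} |S₁(t)|^{2l} dt. -/
set_option maxHeartbeats 1000000


open Filter Real Complex Asymptotics

/-- Theorem 4 of the paper: a finite chain of asymptotic
equivalences for the almost linear increments of the Hardy--Littlewood
integral.  The six members of the chain are collected in `Q : Fin 6 → _`. -/
theorem chain_of_equivalences
    (ε σ : ℝ) (hε : 0 < ε) (hε' : ε < 1 / 8) (hσ : 1 / 2 + ε ≤ σ)
    (l : ℕ) (hl : 1 ≤ l)
    (a : ℕ → ℝ) (ha0 : a 0 = 1 / (2 * Real.pi ^ 2))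
    (F I₂ Iσ : ℝ → ℝ) (g : ℝ → ℝ)
    (hF : ∀ T : ℝ, F T = ∫ t in (0:ℝ)..T,
      ‖riemannZeta (1 / 2 + t * Complex.I)‖ ^ 4)
    (hI₂ : ∀ T : ℝ, I₂ T = ∫ t in T..(g T),
      ‖riemannZeta (1 / 2 + t * Complex.I)‖ ^ 2)
    (hIσ : ∀ T : ℝ, Iσ T = ∫ t in T..(g T),
      ‖riemannZeta (σ + t * Complex.I)‖ ^ 2)
    -- (i) the Ingham--Heath-Brown formula
    (hIngham : (fun T : ℝ => F T -
        T * ∑ s ∈ Finset.range 5, a s * Real.log T ^ (4 - s))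
      =O[atTop] fun T : ℝ => T ^ ((7:ℝ) / 8 + ε))
    -- (ii) Moser's quotient formula
    (hg : ∀ᶠ T : ℝ in atTop, T < g T)
    (hI₂pos : ∀ᶠ T : ℝ in atTop, 0 < I₂ T)
    (hIσpos : ∀ᶠ T : ℝ in atTop, 0 < Iσ T)
    (hquot : (fun T : ℝ =>
        I₂ T / Iσ T - Real.log T / (riemannZeta (2 * σ)).re)
      =O[atTop] fun _ : ℝ => (1:ℝ))
    -- the coefficients and the substitution
    (c : ℕ → ℝ) (hc0 : c 0 = 1)
    (hc : ∀ s : ℕ, 1 ≤ s → s ≤ 4 →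
      c s = 2 * Real.pi ^ 2 * ((riemannZeta (2 * σ)).re) ^ (-(s:ℤ)) * a s)
    (u : ℝ → ℝ → ℝ)
    (hu : ∀ τ x : ℝ, u τ x =
      2 * Real.pi ^ 2 / (riemannZeta (2 * σ)).re ^ 4 * x * τ)
    -- S₁ and the constant c̄(l)
    (S₁ : ℝ → ℝ)
    (hS₁ : ∀ t : ℝ, S₁ t = 1 / Real.pi *
      ∫ v in (0:ℝ)..t, Complex.arg (riemannZeta (1 / 2 + v * Complex.I)))
    (cbar : ℝ) (hcbar : 0 < cbar)
    -- the six members of the chain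
    (Q : Fin 6 → ℝ → ℝ → ℝ)
    (hQ0 : ∀ x τ : ℝ, Q 0 x τ =
      I₂ (x * τ / (1 - Real.eulerMascheroniConstant)))
    (hQ1 : ∀ x τ : ℝ, Q 1 x τ =
      Iσ (u τ x) ^ 4 * F (u τ x) *
        (∑ s ∈ Finset.range 5,
          c s * I₂ (u τ x) ^ (4 - s) * Iσ (u τ x) ^ s)⁻¹)
    (hQ2 : ∀ x τ : ℝ, Q 2 x τ =
      ∑ n ∈ Finset.Ioc ⌊x * τ / (1 - Real.eulerMascheroniConstant)⌋₊
          ⌊g (x * τ / (1 - Real.eulerMascheroniConstant))⌋₊,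
        (n.divisors.card : ℝ))
    (hQ3 : ∀ x τ : ℝ, Q 3 x τ =
      Real.log (Real.Gamma (g (x * τ / (1 - Real.eulerMascheroniConstant))) /
        Real.Gamma (x * τ / (1 - Real.eulerMascheroniConstant))))
    (hQ4 : ∀ x τ : ℝ, Q 4 x τ =
      ∫ t in (1:ℝ)..(x * τ / (riemannZeta (2 * σ)).re),
        ‖riemannZeta (σ + t * Complex.I)‖ ^ 2)
    (hQ5 : ∀ x τ : ℝ, Q 5 x τ =
      ∫ t in (0:ℝ)..(x * τ / cbar), |S₁ t| ^ (2 * l))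
    -- (iii) Moser's earlier ζ-functionals, taken as hypotheses
    (hiii : ∀ i : Fin 6, i ≠ 1 → ∀ x : ℝ, 0 < x →
      Tendsto (fun τ : ℝ => Q i x τ / (x * τ)) atTop (nhds 1)) :
    -- conclusion: the members of the chain are pairwise asymptotically equal
    ∀ x : ℝ, 0 < x → ∀ i j : Fin 6,
      Tendsto (fun τ : ℝ => Q i x τ / Q j x τ) atTop (nhds 1) := by
  
  set z : ℝ := (riemannZeta (2 * σ)).re with hzdef
  have hπ2 : (0:ℝ) < 2 * Real.pi ^ 2 := by positivity
  have ha0ne : a 0 ≠ 0 := by rw [ha0]; positivity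
  -- Step 1 : z ≠ 0 (else hypothesis (iii) for i = 4 is contradictory)
  have hz : z ≠ 0 := by
    intro h0
    have h4 := hiii 4 (by decide) 1 one_pos
    have heq : ∀ τ : ℝ, Q 4 1 τ = -∫ t in (0:ℝ)..(1:ℝ),
        ‖riemannZeta (σ + t * Complex.I)‖ ^ 2 := by
      intro τ
      rw [hQ4, h0, div_zero, intervalIntegral.integral_symm]
    have hconst : Tendsto (fun τ : ℝ => Q 4 1 τ) atTop
        (nhds (-∫ t in (0:ℝ)..(1:ℝ),
          ‖riemannZeta (σ + t * Complex.I)‖ ^ 2)) :=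
      Tendsto.congr (fun τ => (heq τ).symm) tendsto_const_nhds
    have hτT : Tendsto (fun τ : ℝ => 1 * τ) atTop atTop := by
      simp only [one_mul]; exact tendsto_id
    have h40 := hconst.div_atTop hτT
    exact one_ne_zero (tendsto_nhds_unique h4 h40)
  have hz4 : (0:ℝ) < z ^ 4 :=
    lt_of_le_of_ne (by positivity) (Ne.symm (pow_ne_zero 4 hz))
  intro x hx i j
  -- basic limits
  have huT : Tendsto (fun τ => u τ x) atTop atTop := by
    have hK : (0:ℝ) < 2 * Real.pi ^ 2 / z ^ 4 * x := by positivity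
    have hid : Tendsto (fun τ : ℝ => τ) atTop atTop := tendsto_id
    have h := Tendsto.const_mul_atTop hK hid
    exact h.congr fun τ => (hu τ x).symm
  have hLT : Tendsto (fun τ => Real.log (u τ x)) atTop atTop :=
    Real.tendsto_log_atTop.comp huT
  have hinv : Tendsto (fun τ => (Real.log (u τ x))⁻¹) atTop (nhds 0) :=
    hLT.inv_tendsto_atTop
  -- boundedness of r - L/z from hquot
  obtain ⟨C, hCpos, hCbd⟩ := (hquot.comp_tendsto huT).exists_pos
  have hCbd' : ∀ᶠ τ : ℝ in atTop,
      |I₂ (u τ x) / Iσ (u τ x) - Real.log (u τ x) / z| ≤ C := by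
    filter_upwards [hCbd.bound] with τ hτ
    simpa [Function.comp, Real.norm_eq_abs] using hτ
  -- w := z * r / L tends to 1
  have hsmall : Tendsto (fun τ =>
      z * (I₂ (u τ x) / Iσ (u τ x) - Real.log (u τ x) / z) / Real.log (u τ x))
      atTop (nhds 0) := by
    apply squeeze_zero_norm' (a := fun τ => |z| * C * (Real.log (u τ x))⁻¹)
    · filter_upwards [hCbd', hLT.eventually_gt_atTop 0] with τ h1 h2
      rw [Real.norm_eq_abs, abs_div, abs_mul, abs_of_pos h2, div_eq_mul_inv]
      gcongr
    · have h := hinv.const_mul (|z| * C)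
      simpa using h
  have hw : Tendsto (fun τ =>
      z * (I₂ (u τ x) / Iσ (u τ x)) / Real.log (u τ x)) atTop (nhds 1) := by
    have h := hsmall.add (tendsto_const_nhds (α := ℝ) (x := (1:ℝ)))
    rw [zero_add] at h
    apply h.congr'
    filter_upwards [hLT.eventually_gt_atTop 0] with τ h2
    have hL : Real.log (u τ x) ≠ 0 := ne_of_gt h2
    field_simp
    ring
  -- the error term of the Ingham formula is negligible
  obtain ⟨D, hDpos, hDbd⟩ := (hIngham.comp_tendsto huT).exists_pos
  have hEzero : Tendsto (fun τ =>
      (F (u τ x) - u τ x * ∑ s ∈ Finset.range 5,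
        a s * Real.log (u τ x) ^ (4 - s)) / (u τ x * Real.log (u τ x) ^ 4))
      atTop (nhds 0) := by
    apply squeeze_zero_norm' (a := fun τ => D * u τ x ^ ((7:ℝ)/8 + ε - 1))
    · filter_upwards [hDbd.bound, huT.eventually_ge_atTop 1,
        hLT.eventually_ge_atTop 1] with τ hb hu1 hL1
      have hupos : (0:ℝ) < u τ x := lt_of_lt_of_le one_pos hu1
      have hL4 : (1:ℝ) ≤ Real.log (u τ x) ^ 4 := one_le_pow₀ hL1
      have hb' : |F (u τ x) - u τ x * ∑ s ∈ Finset.range 5,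
          a s * Real.log (u τ x) ^ (4 - s)| ≤ D * u τ x ^ ((7:ℝ)/8 + ε) := by
        simpa [Function.comp, Real.norm_eq_abs,
          abs_of_pos (Real.rpow_pos_of_pos hupos _)] using hb
      rw [Real.norm_eq_abs, abs_div, abs_of_pos (by positivity :
        (0:ℝ) < u τ x * Real.log (u τ x) ^ 4)]
      calc |F (u τ x) - u τ x * ∑ s ∈ Finset.range 5,
            a s * Real.log (u τ x) ^ (4 - s)| / (u τ x * Real.log (u τ x) ^ 4)
          ≤ (D * u τ x ^ ((7:ℝ)/8 + ε)) / (u τ x * Real.log (u τ x) ^ 4) := by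
            gcongr
        _ ≤ (D * u τ x ^ ((7:ℝ)/8 + ε)) / (u τ x * 1) := by
            gcongr
        _ = D * u τ x ^ ((7:ℝ)/8 + ε - 1) := by
            rw [mul_one, Real.rpow_sub hupos, Real.rpow_one, mul_div_assoc]
    · have h1 : Tendsto (fun T : ℝ => T ^ ((7:ℝ)/8 + ε - 1)) atTop (nhds 0) := by
        have he : (7:ℝ)/8 + ε - 1 = -(1/8 - ε) := by ring
        rw [he]
        exact tendsto_rpow_neg_atTop (by linarith)
      simpa using (h1.comp huT).const_mul D
  -- limit of the numerator
  have hN : Tendsto (fun τ => F (u τ x) / (u τ x * Real.log (u τ x) ^ 4))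
      atTop (nhds (a 0)) := by
    have hpoly' := ((((tendsto_const_nhds (x := a 0)).add
        ((tendsto_const_nhds (x := a 1)).mul hinv)).add
        ((tendsto_const_nhds (x := a 2)).mul (hinv.pow 2))).add
        ((tendsto_const_nhds (x := a 3)).mul (hinv.pow 3))).add
        ((tendsto_const_nhds (x := a 4)).mul (hinv.pow 4))
    have hval : a 0 + a 1 * 0 + a 2 * 0 ^ 2 + a 3 * 0 ^ 3 + a 4 * 0 ^ 4 = a 0 := by
      ring
    rw [hval] at hpoly'
    have hpoly : Tendsto (fun τ =>
        a 0 + a 1 * (Real.log (u τ x))⁻¹ + a 2 * ((Real.log (u τ x))⁻¹) ^ 2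
          + a 3 * ((Real.log (u τ x))⁻¹) ^ 3
          + a 4 * ((Real.log (u τ x))⁻¹) ^ 4) atTop (nhds (a 0)) := hpoly'
    have h := hpoly.add hEzero
    rw [add_zero] at h
    apply h.congr'
    filter_upwards [huT.eventually_gt_atTop 0, hLT.eventually_gt_atTop 0]
      with τ hu0 hL0
    simp only [Finset.sum_range_succ, Finset.sum_range_zero]
    norm_num
    set Uv := u τ x
    set Lv := Real.log (u τ x)
    field_simp
    ring
  -- limit of the denominator
  have hDn : Tendsto (fun τ =>
      (∑ s ∈ Finset.range 5,
        a s * (z * (I₂ (u τ x) / Iσ (u τ x))) ^ (4 - s))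
        / Real.log (u τ x) ^ 4) atTop (nhds (a 0)) := by
    have hlim := ((((((tendsto_const_nhds (x := a 0)).mul (hw.pow 4)).add
      (((tendsto_const_nhds (x := a 1)).mul (hw.pow 3)).mul hinv)).add
      (((tendsto_const_nhds (x := a 2)).mul (hw.pow 2)).mul (hinv.pow 2))).add
      (((tendsto_const_nhds (x := a 3)).mul hw).mul (hinv.pow 3))).add
      ((tendsto_const_nhds (x := a 4)).mul (hinv.pow 4)))
    have hval : a 0 * 1 ^ 4 + a 1 * 1 ^ 3 * 0 + a 2 * 1 ^ 2 * 0 ^ 2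
        + a 3 * 1 * 0 ^ 3 + a 4 * 0 ^ 4 = a 0 := by ring
    rw [hval] at hlim
    apply hlim.congr'
    filter_upwards [hLT.eventually_gt_atTop 0] with τ hL0
    have hL : Real.log (u τ x) ≠ 0 := ne_of_gt hL0
    simp only [Finset.sum_range_succ, Finset.sum_range_zero]
    norm_num
    set R := I₂ (u τ x) / Iσ (u τ x)
    set Lv := Real.log (u τ x)
    field_simp
  have hDnne : ∀ᶠ τ : ℝ in atTop,
      (∑ s ∈ Finset.range 5,
        a s * (z * (I₂ (u τ x) / Iσ (u τ x))) ^ (4 - s))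
        / Real.log (u τ x) ^ 4 ≠ 0 := hDn.eventually_ne ha0ne
  -- the limit for Q 1
  have hQ1lim : Tendsto (fun τ : ℝ => Q 1 x τ / (x * τ)) atTop (nhds 1) := by
    have hq := hN.div hDn ha0ne
    rw [div_self ha0ne] at hq
    apply hq.congr'
    have hzpow : ∀ s : ℕ, z ^ (-(s:ℤ)) = (z ^ s)⁻¹ := fun s => by
      rw [zpow_neg, zpow_natCast]
    have hc1 := hc 1 (by norm_num) (by norm_num)
    have hc2 := hc 2 (by norm_num) (by norm_num)
    have hc3 := hc 3 (by norm_num) (by norm_num)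
    have hc4 := hc 4 (by norm_num) (by norm_num)
    rw [hzpow] at hc1 hc2 hc3 hc4
    filter_upwards [huT.eventually_gt_atTop 0, hLT.eventually_gt_atTop 0,
      huT.eventually hIσpos, hDnne] with τ hu0 hL0 hIσ0 hdn
    simp only [Pi.div_apply]
    have hL : Real.log (u τ x) ≠ 0 := ne_of_gt hL0
    have hA : Iσ (u τ x) ≠ 0 := ne_of_gt hIσ0
    have hU : u τ x ≠ 0 := ne_of_gt hu0
    have hxτ : x * τ = u τ x * z ^ 4 / (2 * Real.pi ^ 2) := by
      rw [hu]; field_simp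
    have hT : (∑ s ∈ Finset.range 5,
        a s * (z * (I₂ (u τ x) / Iσ (u τ x))) ^ (4 - s)) ≠ 0 := by
      intro h
      rw [h, zero_div] at hdn
      exact hdn rfl
    have hsum : (∑ s ∈ Finset.range 5,
        c s * I₂ (u τ x) ^ (4 - s) * Iσ (u τ x) ^ s)
        = Iσ (u τ x) ^ 4 * (2 * Real.pi ^ 2 / z ^ 4) *
          (∑ s ∈ Finset.range 5,
            a s * (z * (I₂ (u τ x) / Iσ (u τ x))) ^ (4 - s)) := by
      simp only [Finset.sum_range_succ, Finset.sum_range_zero]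
      norm_num
      rw [hc0, hc1, hc2, hc3, hc4, ha0]
      field_simp
    rw [hQ1, hsum, hxτ]
    generalize hTg : (∑ s ∈ Finset.range 5,
        a s * (z * (I₂ (u τ x) / Iσ (u τ x))) ^ (4 - s)) = T at hT ⊢
    field_simp
  -- conclusion
  have key : ∀ k : Fin 6, Tendsto (fun τ : ℝ => Q k x τ / (x * τ)) atTop (nhds 1) := by
    intro k
    by_cases hk : k = 1
    · subst hk; exact hQ1lim
    · exact hiii k hk x hx
  have hdiv := (key i).div (key j) one_ne_zero
  have hone : (1:ℝ) / 1 = 1 := by norm_num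
  rw [hone] at hdiv
  apply hdiv.congr'
  filter_upwards [eventually_gt_atTop 0] with τ hτ
  have hxτ0 : x * τ ≠ 0 := by positivity
  rcases eq_or_ne (Q j x τ) 0 with h0 | h0
  · simp [h0]
  · simp only [Pi.div_apply]
    field_simp
end
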